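/- arXiv:2506.08415 — 2 statements merged into one kernel-verified Lean document; each statement's English description precedes it below -/
import Mathlib

section
/- Under Gaussian design and the well-specified model, for any fixed sketching matrix S with S H Sᵀ invertible, the expected risk of the last multi-pass SGD iterate decomposes exactly as E[R_M(v_L)] = σ² + E‖Sᵀv* − w*‖²_H + E‖θ_L − v*‖²_Σ + E‖v_L − θ_L‖²_Σ, where the expectations are over w*, the data (x_i, y_i), i = 1,…,N, and the sampling indices (i_t); in particular the cross terms vanish because E[S x xᵀ (Sᵀv* − w*)] = 0 and E[v_L | S, w*, data] = θ_L. -/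
open MeasureTheory ProbabilityTheory Matrix Finset
open scoped NNReal ENNReal

noncomputable section

namespace ScalingLaw

/-- The squared `A`-norm `uᵀ A u`. -/
def anormSq {n : ℕ} (A : Matrix (Fin n) (Fin n) ℝ) (u : Fin n → ℝ) : ℝ := u ⬝ᵥ (A *ᵥ u)

/-- The sketched covariance `Σ = S H Sᵀ`. -/
def sketchCov {M d : ℕ} (S : Matrix (Fin M) (Fin d) ℝ) (H : Matrix (Fin d) (Fin d) ℝ) :
    Matrix (Fin M) (Fin M) ℝ := S * H * Sᵀ

/-- Empirical sketched covariance `Σ̂ = S Xᵀ X Sᵀ / N`. -/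
def empCov {M d N : ℕ} (S : Matrix (Fin M) (Fin d) ℝ) (xs : Fin N → Fin d → ℝ) :
    Matrix (Fin M) (Fin M) ℝ :=
  (N : ℝ)⁻¹ • ∑ i : Fin N, vecMulVec (S *ᵥ xs i) (S *ᵥ xs i)

/-- `v* = (S H Sᵀ)⁻¹ S H w*`. -/
def vstar {M d : ℕ} (S : Matrix (Fin M) (Fin d) ℝ) (H : Matrix (Fin d) (Fin d) ℝ)
    (w : Fin d → ℝ) : Fin M → ℝ := (sketchCov S H)⁻¹ *ᵥ (S *ᵥ (H *ᵥ w))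

/-- Effective number of steps `L̃ = ⌊L / log₂ L⌋`. -/
def effSteps (L : ℕ) : ℕ := L / Nat.log 2 L

/-- Geometrically decaying stepsize schedule `γ_t = γ₀ / 2^{⌊t / (L/log L)⌋}`. -/
def stepSize (γ0 : ℝ) (L t : ℕ) : ℝ := γ0 / 2 ^ (t / (L / Nat.log 2 L))

/-- `γ₀ = min {γ, 1/(4 maxᵢ ‖S xᵢ‖²)}`. -/
def gamma0 {M d N : ℕ} [NeZero N] (γ : ℝ) (S : Matrix (Fin M) (Fin d) ℝ)
    (xs : Fin N → Fin d → ℝ) : ℝ :=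
  min γ (1 / (4 * Finset.univ.sup' Finset.univ_nonempty fun i => ∑ j, ((S *ᵥ xs i) j) ^ 2))

/-- `γ₀ = min {γ, 1/(4 tr(S Xᵀ X Sᵀ / N))}`. -/
def gamma0tr {M d N : ℕ} (γ : ℝ) (S : Matrix (Fin M) (Fin d) ℝ)
    (xs : Fin N → Fin d → ℝ) : ℝ :=
  min γ (1 / (4 * Matrix.trace (empCov S xs)))

/-- Gradient descent iterates. -/
def gd {M d N : ℕ} (S : Matrix (Fin M) (Fin d) ℝ) (xs : Fin N → Fin d → ℝ)
    (ys : Fin N → ℝ) (γs : ℕ → ℝ) : ℕ → Fin M → ℝ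
  | 0 => 0
  | t + 1 =>
      gd S xs ys γs t -
        (γs (t + 1) / (N : ℝ)) •
          ∑ i : Fin N, (((S *ᵥ xs i) ⬝ᵥ gd S xs ys γs t - ys i) • (S *ᵥ xs i))

/-- Multi-pass SGD iterates. -/
def sgd {M d N : ℕ} (S : Matrix (Fin M) (Fin d) ℝ) (xs : Fin N → Fin d → ℝ)
    (ys : Fin N → ℝ) (idx : ℕ → Fin N) (γs : ℕ → ℝ) : ℕ → Fin M → ℝ
  | 0 => 0
  | t + 1 =>
      sgd S xs ys idx γs t -
        (γs (t + 1) *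
            ((S *ᵥ xs (idx (t + 1))) ⬝ᵥ sgd S xs ys idx γs t - ys (idx (t + 1)))) •
          (S *ᵥ xs (idx (t + 1)))

/-- The contraction product `∏_{t=1}^{L} (I - γ_t A)`. -/
def contraction {M : ℕ} (A : Matrix (Fin M) (Fin M) ℝ) (γs : ℕ → ℝ) : ℕ → Matrix (Fin M) (Fin M) ℝ
  | 0 => 1
  | t + 1 => (1 - γs (t + 1) • A) * contraction A γs t

/-- `D(Σ̂) = (1/N) (I - ∏_{t=1}^L (I - γ_t Σ̂)) Σ̂⁻¹`. -/
def dMat {M : ℕ} (N : ℕ) (A : Matrix (Fin M) (Fin M) ℝ) (γs : ℕ → ℝ) (L : ℕ) :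
    Matrix (Fin M) (Fin M) ℝ :=
  (N : ℝ)⁻¹ • ((1 - contraction A γs L) * A⁻¹)

/-- The law of a Gaussian sketching matrix with i.i.d. `N(0, 1/M)` entries, as a measure on
`Fin M → Fin d → ℝ`. -/
def sketchMeasure (M d : ℕ) : Measure (Fin M → Fin d → ℝ) :=
  Measure.pi fun _ : Fin M => Measure.pi fun _ : Fin d => gaussianReal 0 ((M : ℝ≥0))⁻¹

/-- `X` is a centered Gaussian vector with covariance `H`: every linear functional of `X` is a
centered real Gaussian with the corresponding variance. -/
def IsGaussianVec {Ω : Type*} [MeasurableSpace Ω] {d : ℕ} (P : Measure Ω)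
    (X : Ω → Fin d → ℝ) (H : Matrix (Fin d) (Fin d) ℝ) : Prop :=
  Measurable X ∧
    ∀ u : Fin d → ℝ,
      P.map (fun ω => u ⬝ᵥ X ω) = gaussianReal 0 (Real.toNNReal (u ⬝ᵥ (H *ᵥ u)))

/-- `k`-th largest eigenvalue (1-indexed) of a real symmetric matrix; junk value `0` otherwise. -/
def eigval {n : ℕ} (A : Matrix (Fin n) (Fin n) ℝ) (k : ℕ) : ℝ :=
  if h : A.IsHermitian then
    (List.insertionSort (· ≥ ·) (List.ofFn h.eigenvalues)).getD (k - 1) 0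
  else 0

/-- Real power of a symmetric matrix through its spectral decomposition (junk value `0` on
non-symmetric matrices). -/
def matRpow {n : ℕ} (A : Matrix (Fin n) (Fin n) ℝ) (r : ℝ) : Matrix (Fin n) (Fin n) ℝ :=
  if h : A.IsHermitian then
    (h.eigenvectorUnitary : Matrix (Fin n) (Fin n) ℝ) *
      Matrix.diagonal (fun i => h.eigenvalues i ^ r) *
      (star (h.eigenvectorUnitary : Matrix (Fin n) (Fin n) ℝ))
  else 0

/-- `tr(A^r) = ∑ μ_i(A)^r` for a symmetric matrix `A`. -/
def traceRpow {n : ℕ} (A : Matrix (Fin n) (Fin n) ℝ) (r : ℝ) : ℝ :=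
  ∑ i : Fin n, eigval A ((i : ℕ) + 1) ^ r

/-- `ℓ²→ℓ²` operator norm of a square matrix. -/
def opNorm {n : ℕ} (A : Matrix (Fin n) (Fin n) ℝ) : ℝ :=
  ‖Matrix.toEuclideanCLM (𝕜 := ℝ) (n := Fin n) A‖

/-- Entrywise expectation of a random matrix. -/
def expMat {Ω : Type*} [MeasurableSpace Ω] (P : Measure Ω) {k l : ℕ}
    (A : Ω → Matrix (Fin k) (Fin l) ℝ) : Matrix (Fin k) (Fin l) ℝ :=
  Matrix.of fun i j => ∫ ω, A ω i j ∂P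

/-- Number of indices `i ∈ [n]` with `s · μ_i(A) > thr`. -/
def countAbove {n : ℕ} (A : Matrix (Fin n) (Fin n) ℝ) (s thr : ℝ) : ℕ :=
  (Finset.univ.filter fun i : Fin n => thr < s * eigval A ((i : ℕ) + 1)).card




/-- The statistical model: a prior `μw` on the true parameter, and for every value `w` of the
true parameter, the law `K w` of the data `(xᵢ, yᵢ)_{i<N}` and of the sampling indices. -/
structure Model (d N : ℕ) (Ω : Type*) [MeasurableSpace Ω] where
  /-- law of the data given the true parameter -/
  K : (Fin d → ℝ) → Measure Ω
  /-- prior on the true parameter `w*` -/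
  μw : Measure (Fin d → ℝ)
  /-- covariates -/
  x : Fin N → Ω → Fin d → ℝ
  /-- responses -/
  y : Fin N → Ω → ℝ
  /-- sampling indices for multi-pass SGD -/
  idx : ℕ → Ω → Fin N
  /-- eigenvalues of the (diagonal, wlog) covariance `H` -/
  lam : Fin d → ℝ
  /-- noise level -/
  σ2 : ℝ

namespace Model

variable {d N : ℕ} {Ω : Type*} [MeasurableSpace Ω]

/-- The covariance `H = diag(λ₁, λ₂, …)`. -/
def covH (m : Model d N Ω) : Matrix (Fin d) (Fin d) ℝ := Matrix.diagonal m.lam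

/-- Assumption 1A–1B and general well-posedness of the model: the covariates are i.i.d. centered
Gaussians with covariance `H`, the model is well-specified, the noise level is `σ2`, and the
sampling indices are i.i.d. uniform on `[N]`, independent of the data. -/
structure IsWellPosed [NeZero N] (m : Model d N Ω) : Prop where
  probK : ∀ w, IsProbabilityMeasure (m.K w)
  probPrior : IsProbabilityMeasure m.μw
  meas_y : ∀ i, Measurable (m.y i)
  meas_idx : ∀ t, Measurable (m.idx t)
  lam_nonneg : ∀ i, 0 ≤ m.lam i
  lam_anti : ∀ i j : Fin d, i ≤ j → m.lam j ≤ m.lam i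
  gauss : ∀ w i, IsGaussianVec (m.K w) (m.x i) m.covH
  iid_data : ∀ w, iIndepFun (fun i ω => (m.x i ω, m.y i ω)) (m.K w)
  ident_data : ∀ w i j, (m.K w).map (fun ω => (m.x i ω, m.y i ω)) =
      (m.K w).map (fun ω => (m.x j ω, m.y j ω))
  wellSpec : ∀ w i,
      (m.K w)[m.y i | MeasurableSpace.comap (m.x i) inferInstance] =ᵐ[m.K w]
        fun ω => m.x i ω ⬝ᵥ w
  noise : ∀ w i, ∫ ω, (m.y i ω - m.x i ω ⬝ᵥ w) ^ 2 ∂(m.K w) = m.σ2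
  idx_unif : ∀ w t, (m.K w).map (m.idx t) = (PMF.uniformOfFintype (Fin N)).toMeasure
  idx_iid : ∀ w, iIndepFun m.idx (m.K w)
  idx_data_indep : ∀ w,
      IndepFun (fun ω => fun i => (m.x i ω, m.y i ω)) (fun ω => fun t => m.idx t ω) (m.K w)

end Model

/-- Power-law spectrum: `λ_i ≍ i^{-a}` (indices 1-based). -/
def PowerLawSpectrum {d : ℕ} (lam : Fin d → ℝ) (a c₁ c₂ : ℝ) : Prop :=
  ∀ i : Fin d, c₁ * ((i : ℝ) + 1) ^ (-a) ≤ lam i ∧ lam i ≤ c₂ * ((i : ℝ) + 1) ^ (-a)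

/-- Source condition: the prior on `w*` has uncorrelated coordinates (in the eigenbasis of `H`)
and `E[λ_i ⟨v_i, w*⟩²] ≍ i^{-b}`. -/
def SourceCondition {d N : ℕ} {Ω : Type*} [MeasurableSpace Ω] (m : Model d N Ω)
    (b c₁ c₂ : ℝ) : Prop :=
  (∀ i j : Fin d, i ≠ j → ∫ w, w i * w j ∂m.μw = 0) ∧
    ∀ i : Fin d,
      c₁ * ((i : ℝ) + 1) ^ (-b) ≤ m.lam i * ∫ w, (w i) ^ 2 ∂m.μw ∧
        m.lam i * ∫ w, (w i) ^ 2 ∂m.μw ≤ c₂ * ((i : ℝ) + 1) ^ (-b)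


section Derived

variable {d N M : ℕ} {Ω : Type*} [MeasurableSpace Ω]

/-- The risk `R(w) = ‖w - w*‖²_H + σ²` of a parameter vector (closed form under
Assumption 1A–1B). -/
def Model.risk (m : Model d N Ω) (wstar : Fin d → ℝ) (w : Fin d → ℝ) : ℝ :=
  anormSq m.covH (w - wstar) + m.σ2

/-- The risk `R_M(v) = R(Sᵀ v)` of a sketched parameter vector. -/
def Model.riskM (m : Model d N Ω) (S : Fin M → Fin d → ℝ) (wstar : Fin d → ℝ)
    (v : Fin M → ℝ) : ℝ :=
  m.risk wstar ((Matrix.of S)ᵀ *ᵥ v)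

/-- The data matrix sketched: `X Sᵀ`, whose `i`-th row is `(S xᵢ)ᵀ`. -/
def sketchData {M d N : ℕ} (S : Matrix (Fin M) (Fin d) ℝ) (xs : Fin N → Fin d → ℝ) :
    Matrix (Fin N) (Fin M) ℝ :=
  Matrix.of fun i j => (S *ᵥ xs i) j

variable [NeZero N]

/-- The realized stepsize schedule, with `γ₀ = min{γ, 1/(4 maxᵢ ‖S xᵢ‖²)}`. -/
def Model.steps (m : Model d N Ω) (S : Fin M → Fin d → ℝ) (γ : ℝ) (L : ℕ) (ω : Ω) :
    ℕ → ℝ :=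
  stepSize (gamma0 γ (Matrix.of S) (fun i => m.x i ω)) L

/-- GD iterates as a function of the sample point. -/
def Model.gdIter (m : Model d N Ω) (S : Fin M → Fin d → ℝ) (γ : ℝ) (L : ℕ) (ω : Ω)
    (t : ℕ) : Fin M → ℝ :=
  gd (Matrix.of S) (fun i => m.x i ω) (fun i => m.y i ω) (m.steps S γ L ω) t

/-- Multi-pass SGD iterates as a function of the sample point. -/
def Model.sgdIter (m : Model d N Ω) (S : Fin M → Fin d → ℝ) (γ : ℝ) (L : ℕ) (ω : Ω)
    (t : ℕ) : Fin M → ℝ :=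
  sgd (Matrix.of S) (fun i => m.x i ω) (fun i => m.y i ω) (fun t => m.idx t ω)
    (m.steps S γ L ω) t

/-- The bias term `Bias = E_{w*} E_X ‖∏_{t=1}^L (I - γ_t Σ̂) v*‖²_Σ`. -/
def Model.biasTerm (m : Model d N Ω) (S : Fin M → Fin d → ℝ) (γ : ℝ) (L : ℕ) : ℝ :=
  ∫ w, (∫ ω,
      anormSq (sketchCov (Matrix.of S) m.covH)
        (contraction (empCov (Matrix.of S) (fun i => m.x i ω)) (m.steps S γ L ω) L *ᵥ
          vstar (Matrix.of S) m.covH w) ∂(m.K w)) ∂m.μw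

/-- The variance term `Variance = E[tr(X Sᵀ D(Σ̂) Σ D(Σ̂) S Xᵀ)]`. -/
def Model.varTerm (m : Model d N Ω) (S : Fin M → Fin d → ℝ) (γ : ℝ) (L : ℕ) : ℝ :=
  ∫ w, (∫ ω,
      Matrix.trace
        (sketchData (Matrix.of S) (fun i => m.x i ω) *
            dMat N (empCov (Matrix.of S) (fun i => m.x i ω)) (m.steps S γ L ω) L *
            sketchCov (Matrix.of S) m.covH *
            dMat N (empCov (Matrix.of S) (fun i => m.x i ω)) (m.steps S γ L ω) L *
            (sketchData (Matrix.of S) (fun i => m.x i ω))ᵀ) ∂(m.K w)) ∂m.μw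

/-- Expected excess risk of GD, `E[R_M(θ_L) - min R_M]`. -/
def Model.excessGD (m : Model d N Ω) (S : Fin M → Fin d → ℝ) (γ : ℝ) (L : ℕ) : ℝ :=
  ∫ w, (∫ ω,
      (m.riskM S w (m.gdIter S γ L ω L) - ⨅ v : Fin M → ℝ, m.riskM S w v) ∂(m.K w)) ∂m.μw

/-- Expected fluctuation error `E[R_M(v_L) - R_M(θ_L)] = E ‖v_L - θ_L‖²_Σ`. -/
def Model.fluctTerm (m : Model d N Ω) (S : Fin M → Fin d → ℝ) (γ : ℝ) (L : ℕ) : ℝ :=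
  ∫ w, (∫ ω,
      anormSq (sketchCov (Matrix.of S) m.covH)
        (m.sgdIter S γ L ω L - m.gdIter S γ L ω L) ∂(m.K w)) ∂m.μw

/-- Expected risk of the last multi-pass SGD iterate. -/
def Model.sgdRisk (m : Model d N Ω) (S : Fin M → Fin d → ℝ) (γ : ℝ) (L : ℕ) : ℝ :=
  ∫ w, (∫ ω, m.riskM S w (m.sgdIter S γ L ω L) ∂(m.K w)) ∂m.μw

end Derived



/-! ### Auxiliary lemmas for Statement 7 -/

section Statement7Aux

open MeasureTheory ProbabilityTheory Matrix

variable {M d N : ℕ}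

lemma dot_diag_comm (lam : Fin d → ℝ) (p q : Fin d → ℝ) :
    p ⬝ᵥ (Matrix.diagonal lam *ᵥ q) = q ⬝ᵥ (Matrix.diagonal lam *ᵥ p) := by
  simp only [dotProduct, Matrix.mulVec_diagonal]
  exact Finset.sum_congr rfl fun i _ => by ring

lemma dot_S (S : Matrix (Fin M) (Fin d) ℝ) (u : Fin M → ℝ) (t : Fin d → ℝ) :
    u ⬝ᵥ (S *ᵥ t) = (Sᵀ *ᵥ u) ⬝ᵥ t := by
  simp only [dotProduct, Matrix.mulVec, Matrix.transpose_apply, Finset.mul_sum,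
    Finset.sum_mul]
  rw [Finset.sum_comm]
  exact Finset.sum_congr rfl fun j _ => Finset.sum_congr rfl fun i _ => by ring

lemma dot_sketch (S : Matrix (Fin M) (Fin d) ℝ) (lam : Fin d → ℝ) (u z : Fin M → ℝ) :
    (Sᵀ *ᵥ u) ⬝ᵥ (Matrix.diagonal lam *ᵥ (Sᵀ *ᵥ z)) =
      u ⬝ᵥ (sketchCov S (Matrix.diagonal lam) *ᵥ z) := by
  rw [sketchCov, ← Matrix.mulVec_mulVec, ← Matrix.mulVec_mulVec, dot_S S]

lemma risk_algebra (S : Matrix (Fin M) (Fin d) ℝ) (lam : Fin d → ℝ)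
    (hinv : IsUnit (sketchCov S (Matrix.diagonal lam))) (w : Fin d → ℝ)
    (v θ : Fin M → ℝ) :
    anormSq (Matrix.diagonal lam) (Sᵀ *ᵥ v - w) =
      anormSq (Matrix.diagonal lam) (Sᵀ *ᵥ vstar S (Matrix.diagonal lam) w - w)
      + anormSq (sketchCov S (Matrix.diagonal lam)) (θ - vstar S (Matrix.diagonal lam) w)
      + anormSq (sketchCov S (Matrix.diagonal lam)) (v - θ)
      + 2 * ((v - θ) ⬝ᵥ (sketchCov S (Matrix.diagonal lam) *ᵥ
          (θ - vstar S (Matrix.diagonal lam) w))) := by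
  set A := Matrix.diagonal lam with hA
  set vs := vstar S A w with hvs
  have hSvs : sketchCov S A *ᵥ vs = S *ᵥ (A *ᵥ w) := by
    have hdet : IsUnit (sketchCov S A).det := (Matrix.isUnit_iff_isUnit_det _).mp hinv
    rw [hvs, vstar, Matrix.mulVec_mulVec, Matrix.mul_nonsing_inv _ hdet, Matrix.one_mulVec]
  have hdec : Sᵀ *ᵥ v - w = (Sᵀ *ᵥ (v - θ)) + ((Sᵀ *ᵥ (θ - vs)) + (Sᵀ *ᵥ vs - w)) := by
    simp only [Matrix.mulVec_sub]
    abel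
  have expand : ∀ (a b c : Fin d → ℝ),
      anormSq A (a + (b + c)) = anormSq A a + anormSq A b + anormSq A c
        + (a ⬝ᵥ (A *ᵥ b) + b ⬝ᵥ (A *ᵥ a)) + (a ⬝ᵥ (A *ᵥ c) + c ⬝ᵥ (A *ᵥ a))
        + (b ⬝ᵥ (A *ᵥ c) + c ⬝ᵥ (A *ᵥ b)) := by
    intro a b c
    simp only [anormSq, Matrix.mulVec_add, dotProduct_add, add_dotProduct]
    ring
  have hS0 : ∀ u1 : Fin M → ℝ, (Sᵀ *ᵥ u1) ⬝ᵥ (A *ᵥ (Sᵀ *ᵥ vs - w)) = 0 := by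
    intro u1
    rw [Matrix.mulVec_sub, dotProduct_sub, hA, dot_sketch]
    rw [show sketchCov S (Matrix.diagonal lam) *ᵥ vs = S *ᵥ (Matrix.diagonal lam *ᵥ w) from hSvs]
    rw [← dot_S, sub_self]
  have hS0' : ∀ u1 : Fin M → ℝ, (Sᵀ *ᵥ vs - w) ⬝ᵥ (A *ᵥ (Sᵀ *ᵥ u1)) = 0 := fun u1 =>
    (dot_diag_comm lam _ _).trans (hS0 u1)
  have hQ : ∀ x : Fin M → ℝ, anormSq A (Sᵀ *ᵥ x) = anormSq (sketchCov S A) x := fun x =>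
    dot_sketch S lam x x
  have hcr2 : (Sᵀ *ᵥ (v - θ)) ⬝ᵥ (A *ᵥ (Sᵀ *ᵥ (θ - vs))) =
      (v - θ) ⬝ᵥ (sketchCov S A *ᵥ (θ - vs)) := dot_sketch S lam _ _
  have hcr : (Sᵀ *ᵥ (θ - vs)) ⬝ᵥ (A *ᵥ (Sᵀ *ᵥ (v - θ))) =
      (v - θ) ⬝ᵥ (sketchCov S A *ᵥ (θ - vs)) :=
    (dot_diag_comm lam _ _).trans (dot_sketch S lam _ _)
  rw [hdec, expand, hS0 (v - θ), hS0 (θ - vs), hS0' (v - θ), hS0' (θ - vs), hcr, hcr2,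
    hQ (v - θ), hQ (θ - vs)]
  ring

lemma anormSq_sketch_eq (S : Matrix (Fin M) (Fin d) ℝ) (lam : Fin d → ℝ) (u : Fin M → ℝ) :
    anormSq (sketchCov S (Matrix.diagonal lam)) u = ∑ i, lam i * ((Sᵀ *ᵥ u) i) ^ 2 := by
  rw [anormSq, ← dot_sketch]
  simp only [dotProduct, Matrix.mulVec_diagonal]
  exact Finset.sum_congr rfl fun i _ => by ring

lemma dot_sketch_eq (S : Matrix (Fin M) (Fin d) ℝ) (lam : Fin d → ℝ) (a b : Fin M → ℝ) :
    a ⬝ᵥ (sketchCov S (Matrix.diagonal lam) *ᵥ b) = ∑ i, lam i * ((Sᵀ *ᵥ a) i * (Sᵀ *ᵥ b) i) := by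
  rw [← dot_sketch]
  simp only [dotProduct, Matrix.mulVec_diagonal]
  exact Finset.sum_congr rfl fun i _ => by ring

lemma cross_bound (S : Matrix (Fin M) (Fin d) ℝ) (lam : Fin d → ℝ)
    (hlam : ∀ i, 0 ≤ lam i) (a b : Fin M → ℝ) :
    |a ⬝ᵥ (sketchCov S (Matrix.diagonal lam) *ᵥ b)| ≤
      (anormSq (sketchCov S (Matrix.diagonal lam)) a
        + anormSq (sketchCov S (Matrix.diagonal lam)) b) / 2 := by
  rw [dot_sketch_eq, anormSq_sketch_eq, anormSq_sketch_eq]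
  calc |∑ i, lam i * ((Sᵀ *ᵥ a) i * (Sᵀ *ᵥ b) i)|
      ≤ ∑ i, |lam i * ((Sᵀ *ᵥ a) i * (Sᵀ *ᵥ b) i)| := Finset.abs_sum_le_sum_abs _ _
    _ ≤ ∑ i, (lam i * ((Sᵀ *ᵥ a) i) ^ 2 + lam i * ((Sᵀ *ᵥ b) i) ^ 2) / 2 := by
        refine Finset.sum_le_sum fun i _ => ?_
        rw [abs_le]
        constructor <;>
          nlinarith [sq_nonneg ((Sᵀ *ᵥ a) i + (Sᵀ *ᵥ b) i), sq_nonneg ((Sᵀ *ᵥ a) i - (Sᵀ *ᵥ b) i),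
            hlam i]
    _ = (∑ i, lam i * ((Sᵀ *ᵥ a) i) ^ 2 + ∑ i, lam i * ((Sᵀ *ᵥ b) i) ^ 2) / 2 := by
        rw [← Finset.sum_add_distrib, ← Finset.sum_div]

/-! #### Averaging multi-pass SGD over the sampling indices gives GD -/

lemma sgd_congr (S : Matrix (Fin M) (Fin d) ℝ) (xs : Fin N → Fin d → ℝ)
    (ys : Fin N → ℝ) (γs : ℕ → ℝ) (idx idx' : ℕ → Fin N) :
    ∀ t, (∀ s, 1 ≤ s → s ≤ t → idx s = idx' s) →
      sgd S xs ys idx γs t = sgd S xs ys idx' γs t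
  | 0, _ => rfl
  | t + 1, h => by
    have ih := sgd_congr S xs ys γs idx idx' t fun s h1 h2 => h s h1 (h2.trans (Nat.le_succ t))
    have ht : idx (t + 1) = idx' (t + 1) := h (t + 1) (Nat.succ_le_succ (Nat.zero_le t)) le_rfl
    simp only [sgd, ih, ht]

/-- Extension of a finitely-indexed index function to `ℕ`. -/
def extIdx {N : ℕ} (L : ℕ) (b : Fin (L + 1) → Fin N) : ℕ → Fin N :=
  fun s => if h : s < L + 1 then b ⟨s, h⟩ else b ⟨0, Nat.succ_pos L⟩

lemma dot_sum {n : ℕ} {ι : Type*} (s : Finset ι) (z : Fin n → ℝ) (f : ι → Fin n → ℝ) :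
    ∑ r ∈ s, z ⬝ᵥ f r = z ⬝ᵥ ∑ r ∈ s, f r := by
  simp only [dotProduct, Finset.sum_apply, Finset.mul_sum]
  rw [Finset.sum_comm]

lemma sum_dot {n : ℕ} {ι : Type*} (s : Finset ι) (z : Fin n → ℝ) (f : ι → Fin n → ℝ) :
    ∑ r ∈ s, f r ⬝ᵥ z = (∑ r ∈ s, f r) ⬝ᵥ z := by
  simp only [dotProduct, Finset.sum_apply, Finset.sum_mul]
  rw [Finset.sum_comm]

lemma sgd_avg [NeZero N] (S : Matrix (Fin M) (Fin d) ℝ) (xs : Fin N → Fin d → ℝ)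
    (ys : Fin N → ℝ) (γs : ℕ → ℝ) (L : ℕ) :
    ∀ t, t ≤ L →
      ∑ b : Fin (L + 1) → Fin N, sgd S xs ys (extIdx L b) γs t
        = ((N : ℝ) ^ (L + 1)) • gd S xs ys γs t := by
  intro t
  induction t with
  | zero => intro _; simp [sgd, gd]
  | succ t IH =>
    intro ht
    have htL : t ≤ L := (Nat.le_succ t).trans ht
    have hN : (N : ℝ) ≠ 0 := Nat.cast_ne_zero.mpr (NeZero.ne N)
    set p : Fin (L + 1) := ⟨t + 1, Nat.lt_succ_of_le ht⟩ with hp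
    set e := Equiv.funSplitAt p (Fin N) with he
    set G := gd S xs ys γs t with hG
    set z : Fin N → Fin M → ℝ := fun j => S *ᵥ xs j with hz
    have hagree : ∀ (j j' : Fin N) (r : { i // i ≠ p } → Fin N),
        sgd S xs ys (extIdx L (e.symm (j, r))) γs t
          = sgd S xs ys (extIdx L (e.symm (j', r))) γs t := by
      intro j j' r
      refine sgd_congr S xs ys γs _ _ t fun s h1 h2 => ?_
      have hs : s < L + 1 := Nat.lt_succ_of_le (h2.trans htL)
      have hne : (⟨s, hs⟩ : Fin (L + 1)) ≠ p := by
        simp only [hp, Ne, Fin.mk.injEq]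
        omega
      simp only [extIdx, dif_pos hs, he, Equiv.funSplitAt_symm_apply, dif_neg hne]
    have hcoord : ∀ (j : Fin N) (r : { i // i ≠ p } → Fin N),
        extIdx L (e.symm (j, r)) (t + 1) = j := by
      intro j r
      have hlt : t + 1 < L + 1 := Nat.lt_succ_of_le ht
      have : (⟨t + 1, hlt⟩ : Fin (L + 1)) = p := rfl
      simp only [extIdx, dif_pos hlt, this, he, Equiv.funSplitAt_symm_apply, dif_pos rfl]
      simp
    set j0 : Fin N := ⟨0, Nat.pos_of_ne_zero (NeZero.ne N)⟩ with hj0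
    set V : ({ i // i ≠ p } → Fin N) → Fin M → ℝ :=
      fun r => sgd S xs ys (extIdx L (e.symm (j0, r))) γs t with hV
    have hsum : ∀ f : (Fin (L + 1) → Fin N) → Fin M → ℝ,
        ∑ b : Fin (L + 1) → Fin N, f b = ∑ j : Fin N, ∑ r : { i // i ≠ p } → Fin N,
          f (e.symm (j, r)) := by
      intro f
      rw [← Equiv.sum_comp e.symm f, Fintype.sum_prod_type]
    have hcard : (Fintype.card ({ i // i ≠ p } → Fin N) : ℝ) = (N : ℝ) ^ L := by
      rw [Fintype.card_fun, Fintype.card_fin]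
      congr 1
      have : Fintype.card { i : Fin (L + 1) // i ≠ p } = L := by
        simp only [Ne]
        rw [Fintype.card_subtype_compl, Fintype.card_fin, Fintype.card_subtype_eq]
        omega
      rw [this, Nat.cast_pow]
    have hIH := IH htL
    rw [hsum] at hIH
    have hVr : ∀ (j : Fin N) (r : { i // i ≠ p } → Fin N),
        sgd S xs ys (extIdx L (e.symm (j, r))) γs t = V r := fun j r => hagree j j0 r
    set T := ∑ r : { i // i ≠ p } → Fin N, V r with hT
    have hNT : (N : ℝ) • T = ((N : ℝ) ^ (L + 1)) • G := by
      rw [← hIH, Finset.sum_congr rfl fun (j : Fin N) _ =>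
        Finset.sum_congr rfl fun (r : { i // i ≠ p } → Fin N) _ => hVr j r, ← hT,
        Finset.sum_const, Finset.card_univ, Fintype.card_fin, ← Nat.cast_smul_eq_nsmul ℝ]
    have hTG : T = ((N : ℝ) ^ L) • G := by
      have := congrArg (fun v => (N : ℝ)⁻¹ • v) hNT
      simp only [smul_smul] at this
      rw [inv_mul_cancel₀ hN, one_smul] at this
      rw [this, pow_succ]
      field_simp
    rw [hsum]
    have hstep : ∀ (j : Fin N) (r : { i // i ≠ p } → Fin N),
        sgd S xs ys (extIdx L (e.symm (j, r))) γs (t + 1)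
          = V r - (γs (t + 1) * (z j ⬝ᵥ V r - ys j)) • z j := by
      intro j r
      simp only [sgd]
      rw [hcoord j r, hagree j j0 r]
    calc ∑ j : Fin N, ∑ r : { i // i ≠ p } → Fin N,
          sgd S xs ys (extIdx L (e.symm (j, r))) γs (t + 1)
        = ∑ j : Fin N, (T - ((N : ℝ) ^ L * γs (t + 1)) • ((z j ⬝ᵥ G - ys j) • z j)) := by
          refine Finset.sum_congr rfl fun j _ => ?_
          rw [Finset.sum_congr rfl fun r _ => hstep j r, Finset.sum_sub_distrib, ← hT]
          congr 1
          rw [← Finset.sum_smul]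
          rw [show ∑ r : { i // i ≠ p } → Fin N, γs (t + 1) * (z j ⬝ᵥ V r - ys j)
              = (N : ℝ) ^ L * γs (t + 1) * (z j ⬝ᵥ G - ys j) from ?_, smul_smul]
          rw [← Finset.mul_sum]
          rw [Finset.sum_sub_distrib, dot_sum, ← hT, hTG, dotProduct_smul,
            Finset.sum_const, Finset.card_univ, nsmul_eq_mul, hcard]
          ring_nf
      _ = ((N : ℝ) ^ (L + 1)) • gd S xs ys γs (t + 1) := by
          rw [Finset.sum_sub_distrib, Finset.sum_const, Finset.card_univ, Fintype.card_fin,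
            ← Nat.cast_smul_eq_nsmul ℝ, hNT, ← Finset.smul_sum]
          simp only [gd, ← hG, smul_sub]
          congr 1
          rw [smul_smul]
          have hz' : ∀ x, z x = S *ᵥ xs x := fun _ => rfl
          simp only [hz']
          congr 1
          rw [pow_succ]
          field_simp

/-! #### Measurability helpers -/

section MeasAux

variable {α : Type*} [MeasurableSpace α]

lemma meas_apply_fin {β : Type*} [MeasurableSpace β] {g : α → Fin N → β} (hg : Measurable g)
    {h : α → Fin N} (hh : Measurable h) : Measurable fun ω => g ω (h ω) := by
  have key : Measurable fun q : (Fin N → β) × Fin N => q.1 q.2 :=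
    measurable_from_prod_countable_left fun j => measurable_pi_apply j
  exact key.comp (hg.prodMk hh)

lemma measurable_dot {n : ℕ} {u v : α → Fin n → ℝ} (hu : Measurable u) (hv : Measurable v) :
    Measurable fun a => u a ⬝ᵥ v a := by
  simp only [dotProduct]
  exact Finset.measurable_sum _ fun i _ =>
    ((measurable_pi_apply i).comp hu).mul ((measurable_pi_apply i).comp hv)

lemma measurable_mulVecS {m n : ℕ} (S : Matrix (Fin m) (Fin n) ℝ) {xs : α → Fin n → ℝ}
    (hxs : Measurable xs) : Measurable fun a => S *ᵥ xs a := by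
  refine measurable_pi_lambda _ fun k => ?_
  simp only [Matrix.mulVec, dotProduct]
  exact Finset.measurable_sum _ fun j _ =>
    measurable_const.mul ((measurable_pi_apply j).comp hxs)

lemma measurable_sup' {ι : Type*} (s : Finset ι) (hs : s.Nonempty) (f : ι → α → ℝ)
    (hf : ∀ i, Measurable (f i)) : Measurable fun a => s.sup' hs fun i => f i a := by
  induction hs using Finset.Nonempty.cons_induction with
  | singleton i => simpa using hf i
  | cons i s hi hs ih =>
    simp only [Finset.sup'_cons hs]
    exact (hf i).sup ih

lemma measurable_gamma0 [NeZero N] (γ : ℝ) (S : Matrix (Fin M) (Fin d) ℝ)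
    {xs : α → Fin N → Fin d → ℝ} (hxs : Measurable xs) :
    Measurable fun a => gamma0 γ S (xs a) := by
  unfold gamma0
  refine measurable_const.min (measurable_const.div ?_)
  refine measurable_const.mul ?_
  refine measurable_sup' _ _ _ fun i => ?_
  exact Finset.measurable_sum _ fun j _ => ((measurable_pi_apply j).comp
    (measurable_mulVecS S ((measurable_pi_apply i).comp hxs))).pow_const 2

lemma measurable_sgd (S : Matrix (Fin M) (Fin d) ℝ) {xs : α → Fin N → Fin d → ℝ}
    {ys : α → Fin N → ℝ} {idx : α → ℕ → Fin N} {γs : α → ℕ → ℝ}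
    (hxs : Measurable xs) (hys : Measurable ys) (hidx : ∀ t, Measurable fun a => idx a t)
    (hγs : ∀ t, Measurable fun a => γs a t) :
    ∀ t, Measurable fun a => sgd S (xs a) (ys a) (idx a) (γs a) t := by
  intro t
  induction t with
  | zero =>
    simp only [sgd]
    exact measurable_const
  | succ n ih =>
    simp only [sgd]
    have hxi : Measurable fun a => xs a (idx a (n + 1)) :=
      meas_apply_fin hxs (hidx (n + 1))
    have hz : Measurable fun a => S *ᵥ xs a (idx a (n + 1)) := measurable_mulVecS S hxi
    have hyi : Measurable fun a => ys a (idx a (n + 1)) :=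
      meas_apply_fin hys (hidx (n + 1))
    have hsc : Measurable fun a =>
        γs a (n + 1) * ((S *ᵥ xs a (idx a (n + 1))) ⬝ᵥ sgd S (xs a) (ys a) (idx a) (γs a) n
          - ys a (idx a (n + 1))) :=
      (hγs (n + 1)).mul ((measurable_dot hz ih).sub hyi)
    refine measurable_pi_lambda _ fun k => ?_
    simp only [Pi.sub_apply, Pi.smul_apply, smul_eq_mul]
    exact ((measurable_pi_apply k).comp ih).sub (hsc.mul ((measurable_pi_apply k).comp hz))

lemma measurable_gd (S : Matrix (Fin M) (Fin d) ℝ) {xs : α → Fin N → Fin d → ℝ}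
    {ys : α → Fin N → ℝ} {γs : α → ℕ → ℝ}
    (hxs : Measurable xs) (hys : Measurable ys) (hγs : ∀ t, Measurable fun a => γs a t) :
    ∀ t, Measurable fun a => gd S (xs a) (ys a) (γs a) t := by
  intro t
  induction t with
  | zero =>
    simp only [gd]
    exact measurable_const
  | succ n ih =>
    simp only [gd]
    refine measurable_pi_lambda _ fun k => ?_
    simp only [Pi.sub_apply, Pi.smul_apply, smul_eq_mul, Finset.sum_apply]
    refine ((measurable_pi_apply k).comp ih).sub (((hγs (n + 1)).div measurable_const).mul ?_)
    refine Finset.measurable_sum _ fun i _ => ?_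
    have hzi : Measurable fun a => S *ᵥ xs a i :=
      measurable_mulVecS S ((measurable_pi_apply i).comp hxs)
    exact ((measurable_dot hzi ih).sub ((measurable_pi_apply i).comp hys)).mul
      ((measurable_pi_apply k).comp hzi)

end MeasAux

/-! #### The key probabilistic lemma -/

lemma integral_avg_zero {d N : ℕ} [NeZero N] {Ω : Type*} [MeasurableSpace Ω]
    (P : Measure Ω) [IsProbabilityMeasure P]
    (x : Fin N → Ω → Fin d → ℝ) (y : Fin N → Ω → ℝ) (idx : ℕ → Ω → Fin N)
    (hx : ∀ i, Measurable (x i)) (hy : ∀ i, Measurable (y i))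
    (hidx : ∀ t, Measurable (idx t))
    (hunif : ∀ t, P.map (idx t) = (PMF.uniformOfFintype (Fin N)).toMeasure)
    (hiid : iIndepFun idx P)
    (hindep : IndepFun (fun ω => fun i => (x i ω, y i ω)) (fun ω => fun t => idx t ω) P)
    (L : ℕ) (Φ : (Fin N → (Fin d → ℝ) × ℝ) → (Fin (L + 1) → Fin N) → ℝ)
    (hΦ : ∀ b, Measurable fun a => Φ a b)
    (hzero : ∀ a, ∑ b : Fin (L + 1) → Fin N, Φ a b = 0)
    (hint : Integrable (fun ω => Φ (fun i => (x i ω, y i ω)) (fun t : Fin (L + 1) => idx t ω)) P) :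
    ∫ ω, Φ (fun i => (x i ω, y i ω)) (fun t : Fin (L + 1) => idx t ω) ∂P = 0 := by
  classical
  set D : Ω → Fin N → (Fin d → ℝ) × ℝ := fun ω => fun i => (x i ω, y i ω) with hD'
  set Iv : Ω → Fin (L + 1) → Fin N := fun ω => fun t => idx t ω with hIv'
  have hD : Measurable D := measurable_pi_lambda _ fun i => (hx i).prodMk (hy i)
  have hIv : Measurable Iv := measurable_pi_lambda _ fun t => hidx t
  have hΦm : Measurable fun q : (Fin N → (Fin d → ℝ) × ℝ) × (Fin (L + 1) → Fin N) =>
      Φ q.1 q.2 := measurable_from_prod_countable_left fun b => hΦ b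
  have hpair : Measurable fun ω => (D ω, Iv ω) := hD.prodMk hIv
  have hDIv : IndepFun D Iv P := by
    have hres : Measurable fun g : ℕ → Fin N => fun t : Fin (L + 1) => g t :=
      measurable_pi_lambda _ fun t => measurable_pi_apply _
    exact hindep.comp measurable_id hres
  have hmapeq : P.map (fun ω => (D ω, Iv ω)) = (P.map D).prod (P.map Iv) :=
    (indepFun_iff_map_prod_eq_prod_map_map hD.aemeasurable hIv.aemeasurable).mp hDIv
  have hν : ∀ b : Fin (L + 1) → Fin N,
      (P.map Iv) {b} = ((N : ℝ≥0∞)⁻¹) ^ (L + 1) := by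
    intro b
    rw [Measure.map_apply hIv (measurableSet_singleton b)]
    set sets : ℕ → Set (Fin N) := fun s =>
      if h : s < L + 1 then {b ⟨s, h⟩} else Set.univ with hsets
    have hpre : Iv ⁻¹' {b} = ⋂ s ∈ Finset.range (L + 1), idx s ⁻¹' sets s := by
      ext ω
      simp only [Set.mem_preimage, Set.mem_singleton_iff, funext_iff, Set.mem_iInter,
        Finset.mem_range, hsets, hIv']
      constructor
      · intro h s hs
        rw [dif_pos hs]
        exact h ⟨s, hs⟩
      · intro h t
        have := h t.1 t.2
        rw [dif_pos t.2] at this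
        simpa using this
    rw [hpre, hiid.measure_inter_preimage_eq_mul (Finset.range (L + 1))
      (fun s _ => by by_cases h : s < L + 1 <;> simp [hsets, h])]
    have hfac : ∀ s ∈ Finset.range (L + 1), P (idx s ⁻¹' sets s) = (N : ℝ≥0∞)⁻¹ := by
      intro s hs
      have hs' : s < L + 1 := Finset.mem_range.mp hs
      rw [hsets]
      simp only [dif_pos hs']
      rw [← Measure.map_apply (hidx s) (measurableSet_singleton _), hunif s,
        PMF.toMeasure_apply_singleton _ _ (measurableSet_singleton _),
        PMF.uniformOfFintype_apply, Fintype.card_fin]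
    rw [Finset.prod_congr rfl hfac, Finset.prod_const, Finset.card_range]
  haveI : IsProbabilityMeasure (P.map Iv) := Measure.isProbabilityMeasure_map hIv.aemeasurable
  haveI : IsProbabilityMeasure (P.map D) := Measure.isProbabilityMeasure_map hD.aemeasurable
  have hinner : ∀ a, ∫ b, Φ a b ∂(P.map Iv) = 0 := by
    intro a
    rw [integral_fintype (Integrable.of_finite)]
    simp only [measureReal_def]
    have : ∀ b : Fin (L + 1) → Fin N,
        ((P.map Iv) {b}).toReal • Φ a b = (((N : ℝ≥0∞)⁻¹) ^ (L + 1)).toReal * Φ a b := by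
      intro b; rw [hν b, smul_eq_mul]
    rw [Finset.sum_congr rfl fun b _ => this b, ← Finset.mul_sum, hzero a, mul_zero]
  have hint2 : Integrable (fun q : (Fin N → (Fin d → ℝ) × ℝ) × (Fin (L + 1) → Fin N) =>
      Φ q.1 q.2) ((P.map D).prod (P.map Iv)) := by
    rw [← hmapeq]
    exact (integrable_map_measure hΦm.aestronglyMeasurable hpair.aemeasurable).mpr hint
  calc ∫ ω, Φ (D ω) (Iv ω) ∂P
      = ∫ q, Φ q.1 q.2 ∂(P.map (fun ω => (D ω, Iv ω))) :=
        (integral_map hpair.aemeasurable hΦm.aestronglyMeasurable).symm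
    _ = ∫ q, Φ q.1 q.2 ∂((P.map D).prod (P.map Iv)) := by rw [hmapeq]
    _ = ∫ a, ∫ b, Φ a b ∂(P.map Iv) ∂(P.map D) := integral_prod _ hint2
    _ = 0 := by simp only [hinner, integral_zero]

end Statement7Aux


/-- Under Gaussian design and the well-specified model, for any fixed sketching
matrix `S` with `S H Sᵀ` invertible, the expected risk of the last multi-pass SGD iterate
decomposes exactly as
`E[R_M(v_L)] = σ² + E‖Sᵀv* - w*‖²_H + E‖θ_L - v*‖²_Σ + E‖v_L - θ_L‖²_Σ`. -/
theorem statement_7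
    (d N M L : ℕ) [NeZero N] (Ω : Type*) [MeasurableSpace Ω] (m : Model d N Ω)
    (S : Fin M → Fin d → ℝ) (γ : ℝ)
    (hwp : m.IsWellPosed)
    -- `S H Sᵀ` is invertible
    (hinv : IsUnit (sketchCov (Matrix.of S) m.covH))
    -- integrability of the various error terms (implicit in the paper)
    (hIntExc : ∀ w, Integrable
      (fun ω => anormSq (sketchCov (Matrix.of S) m.covH)
        (m.gdIter S γ L ω L - vstar (Matrix.of S) m.covH w)) (m.K w))
    (hIntFluct : ∀ w, Integrable
      (fun ω => anormSq (sketchCov (Matrix.of S) m.covH)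
        (m.sgdIter S γ L ω L - m.gdIter S γ L ω L)) (m.K w))
    (hIntRisk : ∀ w, Integrable (fun ω => m.riskM S w (m.sgdIter S γ L ω L)) (m.K w))
    (hIntApprox : Integrable
      (fun w => anormSq m.covH ((Matrix.of S)ᵀ *ᵥ vstar (Matrix.of S) m.covH w - w)) m.μw)
    (hIntExc' : Integrable
      (fun w => ∫ ω, anormSq (sketchCov (Matrix.of S) m.covH)
        (m.gdIter S γ L ω L - vstar (Matrix.of S) m.covH w) ∂(m.K w)) m.μw)
    (hIntFluct' : Integrable
      (fun w => ∫ ω, anormSq (sketchCov (Matrix.of S) m.covH)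
        (m.sgdIter S γ L ω L - m.gdIter S γ L ω L) ∂(m.K w)) m.μw)
    (hIntRisk' : Integrable
      (fun w => ∫ ω, m.riskM S w (m.sgdIter S γ L ω L) ∂(m.K w)) m.μw) :
    m.sgdRisk S γ L =
      m.σ2 +
        (∫ w, anormSq m.covH ((Matrix.of S)ᵀ *ᵥ vstar (Matrix.of S) m.covH w - w) ∂m.μw) +
        (∫ w, (∫ ω, anormSq (sketchCov (Matrix.of S) m.covH)
            (m.gdIter S γ L ω L - vstar (Matrix.of S) m.covH w) ∂(m.K w)) ∂m.μw) +
        m.fluctTerm S γ L := by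
  classical
  haveI := hwp.probPrior
  have hH : m.covH = Matrix.diagonal m.lam := rfl
  -- the per-`w` decomposition
  have key : ∀ w, ∫ ω, m.riskM S w (m.sgdIter S γ L ω L) ∂(m.K w)
      = m.σ2 + anormSq m.covH ((Matrix.of S)ᵀ *ᵥ vstar (Matrix.of S) m.covH w - w)
        + (∫ ω, anormSq (sketchCov (Matrix.of S) m.covH)
            (m.gdIter S γ L ω L - vstar (Matrix.of S) m.covH w) ∂(m.K w))
        + (∫ ω, anormSq (sketchCov (Matrix.of S) m.covH)
            (m.sgdIter S γ L ω L - m.gdIter S γ L ω L) ∂(m.K w)) := by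
    intro w
    haveI := hwp.probK w
    set vs := vstar (Matrix.of S) m.covH w with hvs
    -- the cross term
    set cross : Ω → ℝ := fun ω =>
      (m.sgdIter S γ L ω L - m.gdIter S γ L ω L) ⬝ᵥ
        (sketchCov (Matrix.of S) m.covH *ᵥ (m.gdIter S γ L ω L - vs)) with hcross
    -- measurability of the iterates
    have hxs : Measurable fun ω => fun i => m.x i ω :=
      measurable_pi_lambda _ fun i => (hwp.gauss w i).1
    have hys : Measurable fun ω => fun i => m.y i ω :=
      measurable_pi_lambda _ fun i => hwp.meas_y i
    have hsteps : ∀ t, Measurable fun ω => m.steps S γ L ω t := fun t =>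
      (measurable_gamma0 γ (Matrix.of S) hxs).div measurable_const
    have hsgdm : Measurable fun ω => m.sgdIter S γ L ω L :=
      measurable_sgd (Matrix.of S) hxs hys (fun t => hwp.meas_idx t) hsteps L
    have hgdm : Measurable fun ω => m.gdIter S γ L ω L :=
      measurable_gd (Matrix.of S) hxs hys hsteps L
    have hsubm : Measurable fun ω => m.sgdIter S γ L ω L - m.gdIter S γ L ω L :=
      measurable_pi_lambda _ fun k =>
        ((measurable_pi_apply k).comp hsgdm).sub ((measurable_pi_apply k).comp hgdm)
    have hgvm : Measurable fun ω => m.gdIter S γ L ω L - vs :=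
      measurable_pi_lambda _ fun k =>
        ((measurable_pi_apply k).comp hgdm).sub measurable_const
    have hcrossm : Measurable cross :=
      measurable_dot hsubm (measurable_mulVecS _ hgvm)
    -- integrability of the cross term
    have hcrossint : Integrable cross (m.K w) := by
      refine Integrable.mono' (((hIntFluct w).add (hIntExc w)).div_const 2)
        hcrossm.aestronglyMeasurable (Filter.Eventually.of_forall fun ω => ?_)
      rw [Real.norm_eq_abs, hcross]
      exact cross_bound (Matrix.of S) m.lam hwp.lam_nonneg _ _
    -- the cross term integrates to zero
    have hcross0 : ∫ ω, cross ω ∂(m.K w) = 0 := by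
      -- set up the averaged function
      set A1 : (Fin N → (Fin d → ℝ) × ℝ) → Fin N → Fin d → ℝ := fun a i => (a i).1 with hA1'
      set A2 : (Fin N → (Fin d → ℝ) × ℝ) → Fin N → ℝ := fun a i => (a i).2 with hA2'
      set γF : (Fin N → (Fin d → ℝ) × ℝ) → ℕ → ℝ :=
        fun a => stepSize (gamma0 γ (Matrix.of S) (A1 a)) L with hγF'
      set Φ : (Fin N → (Fin d → ℝ) × ℝ) → (Fin (L + 1) → Fin N) → ℝ := fun a b =>
        (sgd (Matrix.of S) (A1 a) (A2 a) (extIdx L b) (γF a) L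
          - gd (Matrix.of S) (A1 a) (A2 a) (γF a) L) ⬝ᵥ
          (sketchCov (Matrix.of S) m.covH *ᵥ
            (gd (Matrix.of S) (A1 a) (A2 a) (γF a) L - vs)) with hΦ'
      -- pointwise identification with the cross term
      have hpt : ∀ ω, Φ (fun i => (m.x i ω, m.y i ω)) (fun t : Fin (L + 1) => m.idx t ω)
          = cross ω := by
        intro ω
        have hsgdc : sgd (Matrix.of S) (fun i => m.x i ω) (fun i => m.y i ω)
            (extIdx L (fun t : Fin (L + 1) => m.idx t ω)) (m.steps S γ L ω) L
            = m.sgdIter S γ L ω L := by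
          refine sgd_congr _ _ _ _ _ _ L fun s h1 h2 => ?_
          have hs : s < L + 1 := Nat.lt_succ_of_le h2
          simp only [extIdx, dif_pos hs]
        show (sgd (Matrix.of S) (fun i => m.x i ω) (fun i => m.y i ω)
            (extIdx L (fun t : Fin (L + 1) => m.idx t ω)) (m.steps S γ L ω) L
          - m.gdIter S γ L ω L) ⬝ᵥ
          (sketchCov (Matrix.of S) m.covH *ᵥ (m.gdIter S γ L ω L - vs)) = cross ω
        rw [hsgdc, hcross]
      -- measurability in `a`
      have hA1 : Measurable A1 := measurable_pi_lambda _ fun i =>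
        measurable_fst.comp (measurable_pi_apply i)
      have hA2 : Measurable A2 := measurable_pi_lambda _ fun i =>
        measurable_snd.comp (measurable_pi_apply i)
      have hγF : ∀ t, Measurable fun a => γF a t := fun t =>
        (measurable_gamma0 γ (Matrix.of S) hA1).div measurable_const
      have hGm : Measurable fun a => gd (Matrix.of S) (A1 a) (A2 a) (γF a) L :=
        measurable_gd (Matrix.of S) hA1 hA2 hγF L
      have hΦb : ∀ b, Measurable fun a => Φ a b := by
        intro b
        have hFm : Measurable fun a =>
            sgd (Matrix.of S) (A1 a) (A2 a) (extIdx L b) (γF a) L :=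
          measurable_sgd (Matrix.of S) (idx := fun _ => extIdx L b) hA1 hA2
            (fun t => measurable_const) hγF L
        refine measurable_dot ?_ (measurable_mulVecS _ ?_)
        · exact measurable_pi_lambda _ fun k =>
            ((measurable_pi_apply k).comp hFm).sub ((measurable_pi_apply k).comp hGm)
        · exact measurable_pi_lambda _ fun k =>
            ((measurable_pi_apply k).comp hGm).sub measurable_const
      -- the average over all index functions vanishes
      have hzero : ∀ a, ∑ b : Fin (L + 1) → Fin N, Φ a b = 0 := by
        intro a
        rw [hΦ']
        rw [sum_dot]
        rw [Finset.sum_sub_distrib, sgd_avg (Matrix.of S) (A1 a) (A2 a) (γF a) L L le_rfl,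
          Finset.sum_const, Finset.card_univ, Fintype.card_fun, Fintype.card_fin,
          Fintype.card_fin, ← Nat.cast_smul_eq_nsmul ℝ, Nat.cast_pow]
        rw [sub_self, zero_dotProduct]
      have hintΦ : Integrable (fun ω =>
          Φ (fun i => (m.x i ω, m.y i ω)) (fun t : Fin (L + 1) => m.idx t ω)) (m.K w) :=
        hcrossint.congr (Filter.Eventually.of_forall fun ω => (hpt ω).symm)
      have h0 := integral_avg_zero (m.K w) m.x m.y m.idx (fun i => (hwp.gauss w i).1)
        hwp.meas_y hwp.meas_idx (hwp.idx_unif w) (hwp.idx_iid w) (hwp.idx_data_indep w)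
        L Φ hΦb hzero hintΦ
      rw [← h0]
      exact integral_congr_ae (Filter.Eventually.of_forall fun ω => (hpt ω).symm)
    -- pointwise risk decomposition
    have hpt : ∀ ω, m.riskM S w (m.sgdIter S γ L ω L) =
        (m.σ2 + anormSq m.covH ((Matrix.of S)ᵀ *ᵥ vs - w))
        + (anormSq (sketchCov (Matrix.of S) m.covH) (m.gdIter S γ L ω L - vs)
          + (anormSq (sketchCov (Matrix.of S) m.covH)
              (m.sgdIter S γ L ω L - m.gdIter S γ L ω L) + 2 * cross ω)) := by
      intro ω
      show anormSq m.covH ((Matrix.of S)ᵀ *ᵥ m.sgdIter S γ L ω L - w) + m.σ2 = _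
      rw [hcross, hvs, hH]
      rw [risk_algebra (Matrix.of S) m.lam (hH ▸ hinv) w (m.sgdIter S γ L ω L)
        (m.gdIter S γ L ω L)]
      ring
    -- integrate the decomposition
    rw [integral_congr_ae (Filter.Eventually.of_forall hpt)]
    have hint1 : Integrable (fun ω => anormSq (sketchCov (Matrix.of S) m.covH)
        (m.sgdIter S γ L ω L - m.gdIter S γ L ω L) + 2 * cross ω) (m.K w) :=
      (hIntFluct w).add (hcrossint.const_mul 2)
    have hint2 : Integrable (fun ω => anormSq (sketchCov (Matrix.of S) m.covH)
        (m.gdIter S γ L ω L - vs)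
        + (anormSq (sketchCov (Matrix.of S) m.covH)
            (m.sgdIter S γ L ω L - m.gdIter S γ L ω L) + 2 * cross ω)) (m.K w) :=
      (hIntExc w).add hint1
    rw [integral_add (integrable_const _) hint2, integral_add (hIntExc w) hint1,
      integral_add (hIntFluct w) (hcrossint.const_mul 2), integral_const_mul, hcross0,
      mul_zero, add_zero, integral_const, probReal_univ, one_smul]
    ring
  -- integrate over the prior
  unfold Model.sgdRisk Model.fluctTerm
  rw [integral_congr_ae (Filter.Eventually.of_forall key)]
  have hI1 : Integrable (fun w =>
      m.σ2 + anormSq m.covH ((Matrix.of S)ᵀ *ᵥ vstar (Matrix.of S) m.covH w - w)) m.μw :=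
    (integrable_const _).add hIntApprox
  have hI2 : Integrable (fun w =>
      m.σ2 + anormSq m.covH ((Matrix.of S)ᵀ *ᵥ vstar (Matrix.of S) m.covH w - w)
      + ∫ ω, anormSq (sketchCov (Matrix.of S) m.covH)
          (m.gdIter S γ L ω L - vstar (Matrix.of S) m.covH w) ∂(m.K w)) m.μw :=
    hI1.add hIntExc'
  rw [integral_add hI2 hIntFluct', integral_add hI1 hIntExc',
    integral_add (integrable_const m.σ2) hIntApprox, integral_const, probReal_univ,
    one_smul]


end ScalingLaw
end
end

section
/- Let Σ̂ be a random M×M positive semi-definite matrix and γ_0 a (possibly random, Σ̂-measurable) stepsize with γ_0 ‖Σ̂‖ ≤ 1/4 almost surely, and let γ_t = γ_0/2^{⌊t/(L/log L)⌋} for t = 1, …, L with L̃ := ⌊L/log L⌋. Then the matrix E[∏_{t=1}^L (I − γ_t Σ̂)] satisfies μ_{M−i+1}(E[∏_{t=1}^L (I − γ_t Σ̂)]) ≥ 1/(2e) for every i ≥ 2k̄ + 1, where k̄ := E[#{i ∈ [M] : λ̂_i L̃ γ_0 > 1/4}] and λ̂_1 ≥ ⋯ ≥ λ̂_M are the eigenvalues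 of Σ̂, and μ_j(A) denotes the j-th largest eigenvalue of A. -/
open MeasureTheory ProbabilityTheory Matrix Finset
open scoped NNReal ENNReal

noncomputable section

namespace ScalingLaw

/-! ### Auxiliary lemmas for Statement 11 -/

section Statement11Aux

variable {M : ℕ}

/- Scalar lemmas -/

lemma exp_neg_two_le {x : ℝ} (h0 : 0 ≤ x) (h1 : x ≤ 1/2) : Real.exp (-(2*x)) ≤ 1 - x := by
  have h2 : (1:ℝ) + 2*x ≤ Real.exp (2*x) := by
    have := Real.add_one_le_exp (2*x); linarith
  have hpos : (0:ℝ) < 1 + 2*x := by linarith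
  have h3 : Real.exp (-(2*x)) = (Real.exp (2*x))⁻¹ := by rw [Real.exp_neg]
  have h4 : (Real.exp (2*x))⁻¹ ≤ (1 + 2*x)⁻¹ := inv_anti₀ hpos h2
  have h5 : (1 + 2*x)⁻¹ ≤ 1 - x := by
    rw [inv_le_iff_one_le_mul₀ hpos]
    nlinarith
  linarith [h3 ▸ h4]

lemma sum_geom_div_le (m : ℕ) (hm : 1 ≤ m) (L : ℕ) :
    ∑ t ∈ range L, ((1:ℝ)/2) ^ (t / m) ≤ 2 * m := by
  have key : ∀ q : ℕ, ∑ t ∈ range (q * m), ((1:ℝ)/2) ^ (t / m) = m * ∑ j ∈ range q, ((1:ℝ)/2)^j := by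
    intro q
    induction q with
    | zero => simp
    | succ q ih =>
        have hle : q * m ≤ (q+1) * m := by nlinarith
        rw [← Finset.sum_range_add_sum_Ico _ hle, ih, Finset.sum_range_succ]
        have hcongr : ∀ t ∈ Ico (q*m) ((q+1)*m), ((1:ℝ)/2)^(t/m) = ((1:ℝ)/2)^q := by
          intro t ht; rw [mem_Ico] at ht
          congr 1
          exact Nat.div_eq_of_lt_le ht.1 ht.2
        rw [Finset.sum_congr rfl hcongr, Finset.sum_const, Nat.card_Ico]
        have hm2 : (q+1)*m - q*m = m := by
          rw [add_mul, one_mul, Nat.add_sub_cancel_left]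
        rw [hm2, nsmul_eq_mul]
        ring
  have hLle : L ≤ (L / m + 1) * m := by
    have h1 := Nat.mod_add_div L m
    have h2 := Nat.mod_lt L (show 0 < m by omega)
    nlinarith [h1, h2]
  calc ∑ t ∈ range L, ((1:ℝ)/2) ^ (t / m)
      ≤ ∑ t ∈ range ((L / m + 1) * m), ((1:ℝ)/2) ^ (t / m) := by
        apply Finset.sum_le_sum_of_subset_of_nonneg (Finset.range_subset_range.2 hLle)
        intro i _ _; positivity
    _ = m * ∑ j ∈ range (L / m + 1), ((1:ℝ)/2)^j := key _
    _ ≤ m * 2 := by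
        have := sum_geometric_two_le (L / m + 1)
        have hm' : (0:ℝ) ≤ m := by positivity
        nlinarith
    _ = 2 * m := by ring

lemma stepSize_le {g : ℝ} (hg : 0 ≤ g) (L t : ℕ) : stepSize g L t ≤ g := by
  unfold stepSize
  have h2 : (1:ℝ) ≤ 2 ^ (t / (L / Nat.log 2 L)) := one_le_pow₀ one_le_two
  exact div_le_self hg h2

lemma stepSize_nonneg {g : ℝ} (hg : 0 ≤ g) (L t : ℕ) : 0 ≤ stepSize g L t := by
  unfold stepSize; positivity

lemma prod_one_sub_step_ge {g lam : ℝ} (hg : 0 ≤ g) (hlam : 0 ≤ lam) (hgl : g*lam ≤ 1/4)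
    (L : ℕ) (hkey : (effSteps L : ℝ) * (g * lam) ≤ 1/4) :
    Real.exp (-1) ≤ ∏ t ∈ range L, (1 - stepSize g L (t+1) * lam) := by
  have hexp1 : Real.exp (-1 : ℝ) ≤ 1/2 := by
    have := exp_neg_two_le (x := 1/2) (by norm_num) (by norm_num)
    norm_num at this ⊢
    linarith
  match L, hkey with
  | 0, _ => simpa using hexp1.trans (by norm_num)
  | 1, _ =>
      have h1 : stepSize g 1 1 = g := by
        unfold stepSize
        norm_num
      rw [Finset.prod_range_one, h1]
      nlinarith [mul_nonneg hg hlam]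
  | (n+2), hkey =>
      set L := n + 2 with hL
      have hlogpos : 0 < Nat.log 2 L := Nat.log_pos one_lt_two (by omega)
      have hm : 1 ≤ effSteps L := (Nat.one_le_div_iff hlogpos).2 (Nat.log_le_self 2 L)
      set m := effSteps L with hmdef
      have hsum : ∑ t ∈ range L, stepSize g L (t+1) * lam ≤ 1/2 := by
        have hrw : ∀ t : ℕ, stepSize g L (t+1) * lam = (g*lam) * ((1:ℝ)/2)^((t+1)/m) := by
          intro t
          unfold stepSize
          rw [div_pow, one_pow]
          show g / 2 ^ ((t+1) / m) * lam = g * lam * (1 / 2 ^ ((t+1)/m))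
          ring
        calc ∑ t ∈ range L, stepSize g L (t+1) * lam
            = (g*lam) * ∑ t ∈ range L, ((1:ℝ)/2)^((t+1)/m) := by
              rw [Finset.mul_sum]; exact Finset.sum_congr rfl fun t _ => hrw t
          _ ≤ (g*lam) * ∑ t ∈ range L, ((1:ℝ)/2)^(t/m) := by
              apply mul_le_mul_of_nonneg_left _ (mul_nonneg hg hlam)
              apply Finset.sum_le_sum
              intro t _
              exact pow_le_pow_of_le_one (by norm_num) (by norm_num)
                (Nat.div_le_div_right (Nat.le_succ t))
          _ ≤ (g*lam) * (2*m) := by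
              apply mul_le_mul_of_nonneg_left (sum_geom_div_le m hm L) (mul_nonneg hg hlam)
          _ ≤ 1/2 := by nlinarith [mul_nonneg hg hlam]
      have hfac : ∀ t ∈ range L, Real.exp (-(2 * (stepSize g L (t+1) * lam)))
          ≤ 1 - stepSize g L (t+1) * lam := by
        intro t _
        have h0 : 0 ≤ stepSize g L (t+1) * lam :=
          mul_nonneg (stepSize_nonneg hg L (t+1)) hlam
        have h1 : stepSize g L (t+1) * lam ≤ 1/2 := by
          have := mul_le_mul_of_nonneg_right (stepSize_le hg L (t+1)) hlam
          linarith
        exact exp_neg_two_le h0 h1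
      calc Real.exp (-1 : ℝ)
          ≤ Real.exp (∑ t ∈ range L, -(2 * (stepSize g L (t+1) * lam))) := by
            apply Real.exp_le_exp.2
            have : ∑ t ∈ range L, -(2 * (stepSize g L (t+1) * lam))
                = -(2 * ∑ t ∈ range L, stepSize g L (t+1) * lam) := by
              rw [Finset.sum_neg_distrib, ← Finset.mul_sum]
            rw [this]
            linarith
        _ = ∏ t ∈ range L, Real.exp (-(2 * (stepSize g L (t+1) * lam))) := Real.exp_sum _ _
        _ ≤ ∏ t ∈ range L, (1 - stepSize g L (t+1) * lam) := by
            apply Finset.prod_le_prod (fun t _ => (Real.exp_pos _).le) hfac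

/- Algebraic lemmas on `contraction` -/

lemma contraction_commute (A : Matrix (Fin M) (Fin M) ℝ) (γs : ℕ → ℝ) (n : ℕ) :
    Commute A (contraction A γs n) := by
  induction n with
  | zero => exact Commute.one_right A
  | succ n ih =>
      exact (((Commute.one_right A).sub_right ((Commute.refl A).smul_right _)).mul_right ih)

lemma contraction_transpose {A : Matrix (Fin M) (Fin M) ℝ} (hA : Aᵀ = A) (γs : ℕ → ℝ) (n : ℕ) :
    (contraction A γs n)ᵀ = contraction A γs n := by
  induction n with
  | zero => simp [contraction]
  | succ n ih =>
      have hc : Commute (1 - γs (n+1) • A) (contraction A γs n) :=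
        (Commute.one_left _).sub_left ((contraction_commute A γs n).smul_left _)
      rw [contraction, transpose_mul, ih, transpose_sub, transpose_one, transpose_smul, hA]
      exact hc.symm

/- Sorted eigenvalue list lemmas -/

lemma card_filter_eq_countP {n : ℕ} (f : Fin n → ℝ) (p : ℝ → Prop) [DecidablePred p] :
    (Finset.univ.filter fun i => p (f i)).card = (List.ofFn f).countP (fun x => decide (p x)) := by
  classical
  rw [List.ofFn_eq_map, List.countP_map, Fin.univ_def]
  rw [Finset.card_filter]
  change ((List.finRange n : Multiset (Fin n)).map fun i => if p (f i) then 1 else 0).sum = _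
  rw [Multiset.map_coe, Multiset.sum_coe]
  rw [List.countP_eq_length_filter]
  induction (List.finRange n) with
  | nil => simp
  | cons a l ih =>
      by_cases hp : p (f a) <;> simp [List.filter_cons, hp, Function.comp, ih, Nat.add_comm]

lemma eigval_eq_get {n : ℕ} {A : Matrix (Fin n) (Fin n) ℝ} (hA : A.IsHermitian)
    (i : ℕ) (hi : i < n) :
    eigval A (i+1) = (List.insertionSort (· ≥ ·) (List.ofFn hA.eigenvalues)).get
      ⟨i, by rw [List.length_insertionSort, List.length_ofFn]; exact hi⟩ := by
  rw [eigval, dif_pos hA]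
  simp only [Nat.add_sub_cancel]
  exact List.getD_eq_getElem _ _ _

lemma card_filter_eigval_eq {n : ℕ} {A : Matrix (Fin n) (Fin n) ℝ} (hA : A.IsHermitian)
    (p : ℝ → Prop) [DecidablePred p] :
    (Finset.univ.filter fun i : Fin n => p (eigval A ((i:ℕ)+1))).card =
      (Finset.univ.filter fun l : Fin n => p (hA.eigenvalues l)).card := by
  classical
  set lst := List.insertionSort (· ≥ ·) (List.ofFn hA.eigenvalues) with hlst
  have hlen : lst.length = n := by
    rw [hlst, List.length_insertionSort, List.length_ofFn]
  have h1 : (Finset.univ.filter fun i : Fin n => p (eigval A ((i:ℕ)+1))).card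
      = lst.countP (fun x => decide (p x)) := by
    have hlsteq : lst = List.ofFn (fun i : Fin n => lst.get ⟨i, by rw [hlen]; exact i.isLt⟩) := by
      apply List.ext_get (by simp [hlen])
      intro k h1 h2
      simp
    rw [card_filter_eq_countP (fun i : Fin n => eigval A ((i:ℕ)+1)) p]
    conv_rhs => rw [hlsteq]
    exact congrArg (List.countP fun x => decide (p x)) (congrArg List.ofFn
      (funext fun i => eigval_eq_get hA i i.isLt))
  rw [h1, (List.perm_insertionSort (· ≥ ·) (List.ofFn hA.eigenvalues)).countP_eq,
    ← card_filter_eq_countP]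

lemma eigval_anti {n : ℕ} {A : Matrix (Fin n) (Fin n) ℝ} (hA : A.IsHermitian)
    {a b : ℕ} (hab : a ≤ b) (hb : b < n) :
    eigval A (b+1) ≤ eigval A (a+1) := by
  rw [eigval_eq_get hA a (lt_of_le_of_lt hab hb), eigval_eq_get hA b hb]
  exact List.Pairwise.rel_get_of_le
    (R := fun x1 x2 : ℝ => x1 ≥ x2)
    (List.pairwise_insertionSort (fun x1 x2 : ℝ => x1 ≥ x2) (List.ofFn hA.eigenvalues))
    (Fin.mk_le_mk.mpr hab)

lemma le_eigval_of_count_lt {n : ℕ} {A : Matrix (Fin n) (Fin n) ℝ} (hA : A.IsHermitian)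
    {τ : ℝ} {i : ℕ} (hi1 : 1 ≤ i) (hiM : i ≤ n)
    (hcount : (Finset.univ.filter fun l : Fin n => hA.eigenvalues l < τ).card < i) :
    τ ≤ eigval A (n - i + 1) := by
  by_contra hlt
  push_neg at hlt
  have hni : n - i < n := by omega
  have hsub : ∀ j : Fin i, eigval A ((n - i + (j:ℕ)) + 1) < τ := by
    intro j
    have hj : n - i + (j:ℕ) < n := by omega
    exact lt_of_le_of_lt (eigval_anti hA (Nat.le_add_right _ _) hj) hlt
  have hinj : Function.Injective (fun j : Fin i => (⟨n - i + (j:ℕ), by omega⟩ : Fin n)) := by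
    intro a b hab
    simp only [Fin.mk.injEq] at hab
    exact Fin.ext (by omega)
  have hmaps : ∀ j : Fin i, (⟨n - i + (j:ℕ), by omega⟩ : Fin n) ∈
      (Finset.univ.filter fun l : Fin n => eigval A ((l:ℕ)+1) < τ) := by
    intro j
    simp only [Finset.mem_filter, Finset.mem_univ, true_and]
    exact hsub j
  have hcard : i ≤ (Finset.univ.filter fun l : Fin n => eigval A ((l:ℕ)+1) < τ).card := by
    calc i = (Finset.univ : Finset (Fin i)).card := by simp
      _ ≤ _ := Finset.card_le_card_of_injOn _ (fun j _ => hmaps j) (fun a _ b _ h => hinj h)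
  rw [card_filter_eigval_eq hA (fun x => x < τ)] at hcard
  omega

/- Spectral decomposition lemmas -/

lemma one_sub_smul_conj {A : Matrix (Fin M) (Fin M) ℝ} (hH : A.IsHermitian) (γ : ℝ) :
    1 - γ • A = (hH.eigenvectorUnitary : Matrix (Fin M) (Fin M) ℝ) *
      diagonal (fun l => 1 - γ * hH.eigenvalues l) *
      star (hH.eigenvectorUnitary : Matrix (Fin M) (Fin M) ℝ) := by
  set U := (hH.eigenvectorUnitary : Matrix (Fin M) (Fin M) ℝ) with hU
  have hUU : U * star U = 1 := Matrix.mem_unitaryGroup_iff.mp hH.eigenvectorUnitary.2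
  have hspec : A = U * diagonal hH.eigenvalues * star U := by
    have := hH.spectral_theorem
    rwa [RCLike.ofReal_real_eq_id, Function.id_comp] at this
  have hdiag : diagonal (fun l => 1 - γ * hH.eigenvalues l)
      = 1 - γ • diagonal hH.eigenvalues := by
    rw [← diagonal_one, ← diagonal_smul, ← diagonal_sub]
    rfl
  rw [hdiag, Matrix.mul_sub, Matrix.sub_mul, Matrix.mul_one, hUU, Matrix.mul_smul,
    Matrix.smul_mul, ← hspec]

lemma contraction_conj {A : Matrix (Fin M) (Fin M) ℝ} (hH : A.IsHermitian) (γs : ℕ → ℝ) (n : ℕ) :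
    contraction A γs n = (hH.eigenvectorUnitary : Matrix (Fin M) (Fin M) ℝ) *
      diagonal (fun l => ∏ t ∈ range n, (1 - γs (t+1) * hH.eigenvalues l)) *
      star (hH.eigenvectorUnitary : Matrix (Fin M) (Fin M) ℝ) := by
  set U := (hH.eigenvectorUnitary : Matrix (Fin M) (Fin M) ℝ) with hU
  have hUU : U * star U = 1 := Matrix.mem_unitaryGroup_iff.mp hH.eigenvectorUnitary.2
  have hU'U : star U * U = 1 := Matrix.mem_unitaryGroup_iff'.mp hH.eigenvectorUnitary.2
  induction n with
  | zero =>
      simp only [contraction, range_zero, Finset.prod_empty]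
      rw [diagonal_one, Matrix.mul_one, hUU]
  | succ n ih =>
      rw [contraction, ih, one_sub_smul_conj hH (γs (n+1))]
      simp only [Matrix.mul_assoc]
      rw [← Matrix.mul_assoc (star U) U (diagonal _ * star U), hU'U, Matrix.one_mul,
        ← Matrix.mul_assoc (diagonal _) (diagonal _) (star U), diagonal_mul_diagonal]
      have hfun : (fun i => (1 - γs (n + 1) * hH.eigenvalues i) *
            ∏ t ∈ range n, (1 - γs (t + 1) * hH.eigenvalues i))
          = (fun l => ∏ t ∈ range (n + 1), (1 - γs (t + 1) * hH.eigenvalues l)) :=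
        funext fun i => by rw [Finset.prod_range_succ]; ring
      rw [hfun]

lemma quad_conj (U : Matrix (Fin M) (Fin M) ℝ) (μ : Fin M → ℝ) (x y : Fin M → ℝ) :
    x ⬝ᵥ ((U * diagonal μ * star U) *ᵥ y) =
      ∑ l, μ l * ((fun i => U i l) ⬝ᵥ x) * ((fun i => U i l) ⬝ᵥ y) := by
  rw [← mulVec_mulVec, ← mulVec_mulVec, dotProduct_mulVec]
  have h1 : ∀ l, (star U *ᵥ y) l = (fun i => U i l) ⬝ᵥ y := by
    intro l
    simp [mulVec, dotProduct, Matrix.star_apply]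
  have h2 : ∀ l, (x ᵥ* U) l = (fun i => U i l) ⬝ᵥ x := by
    intro l
    simp [vecMul, dotProduct, mul_comm]
  simp only [dotProduct, mulVec_diagonal]
  apply Finset.sum_congr rfl
  intro l _
  rw [h2 l, h1 l]
  simp only [dotProduct]
  ring

lemma parseval_dot' {U : Matrix (Fin M) (Fin M) ℝ} (hUU : U * star U = 1) (x y : Fin M → ℝ) :
    ∑ l, ((fun i => U i l) ⬝ᵥ x) * ((fun i => U i l) ⬝ᵥ y) = x ⬝ᵥ y := by
  have h := quad_conj U (fun _ => (1:ℝ)) x y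
  rw [diagonal_one, Matrix.mul_one, hUU, one_mulVec] at h
  simp only [one_mul] at h
  exact h.symm

lemma col_dot_col {U : Matrix (Fin M) (Fin M) ℝ} (hU'U : star U * U = 1) (l : Fin M) :
    (fun i => U i l) ⬝ᵥ (fun i => U i l) = 1 := by
  have h := congrFun (congrFun hU'U l) l
  simpa [Matrix.mul_apply, Matrix.star_apply, dotProduct, Matrix.one_apply] using h

lemma eigenvalues_le_opNorm {A : Matrix (Fin M) (Fin M) ℝ} (hH : A.IsHermitian) (l : Fin M) :
    hH.eigenvalues l ≤ opNorm A := by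
  have hmv := hH.mulVec_eigenvectorBasis l
  set v : EuclideanSpace ℝ (Fin M) := hH.eigenvectorBasis l with hv
  have hnv : ‖v‖ = 1 := hH.eigenvectorBasis.orthonormal.1 l
  have happ : Matrix.toEuclideanCLM (𝕜 := ℝ) (n := Fin M) A v = hH.eigenvalues l • v := by
    have h := Matrix.toEuclideanCLM_toLp (𝕜 := ℝ) A (⇑v)
    calc Matrix.toEuclideanCLM (𝕜 := ℝ) (n := Fin M) A v
        = Matrix.toEuclideanCLM (𝕜 := ℝ) (n := Fin M) A (WithLp.toLp 2 ⇑v) := rfl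
      _ = WithLp.toLp 2 (A *ᵥ ⇑v) := h
      _ = WithLp.toLp 2 (hH.eigenvalues l • ⇑v) := by rw [hmv]
      _ = hH.eigenvalues l • v := rfl
  have hb : ‖Matrix.toEuclideanCLM (𝕜 := ℝ) (n := Fin M) A v‖ ≤ opNorm A * ‖v‖ :=
    (Matrix.toEuclideanCLM (𝕜 := ℝ) (n := Fin M) A).le_opNorm v
  rw [happ, norm_smul, hnv, Real.norm_eq_abs, mul_one, mul_one] at hb
  exact (le_abs_self _).trans hb

/- Measurability lemmas -/

lemma measurable_contraction_entry {Ω : Type*} [MeasurableSpace Ω]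
    {Sig : Ω → Matrix (Fin M) (Fin M) ℝ} {γs : Ω → ℕ → ℝ}
    (hent : ∀ a b, Measurable fun ω => Sig ω a b) (hγ : ∀ t, Measurable fun ω => γs ω t)
    (n : ℕ) (a b : Fin M) : Measurable fun ω => contraction (Sig ω) (γs ω) n a b := by
  induction n generalizing a b with
  | zero =>
      simp only [contraction]
      exact measurable_const
  | succ n ih =>
      simp only [contraction, Matrix.mul_apply, Matrix.sub_apply, Matrix.smul_apply,
        Matrix.one_apply, smul_eq_mul]
      exact Finset.measurable_sum _ fun c _ =>
        (measurable_const.sub ((hγ (n+1)).mul (hent a c))).mul (ih c b)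

lemma measurable_pow_entry {Ω : Type*} [MeasurableSpace Ω]
    {Sig : Ω → Matrix (Fin M) (Fin M) ℝ}
    (hent : ∀ a b, Measurable fun ω => Sig ω a b) (k : ℕ) (a b : Fin M) :
    Measurable fun ω => (Sig ω ^ k) a b := by
  induction k generalizing a b with
  | zero => simp only [pow_zero]; exact measurable_const
  | succ k ih =>
      simp only [pow_succ, Matrix.mul_apply]
      exact Finset.measurable_sum _ fun c _ => (ih a c).mul (hent c b)

lemma conj_pow {U : Matrix (Fin M) (Fin M) ℝ} (hUU : U * star U = 1)
    (hU'U : star U * U = 1) (d : Fin M → ℝ) (k : ℕ) :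
    (U * diagonal d * star U) ^ k = U * diagonal (fun l => d l ^ k) * star U := by
  induction k with
  | zero =>
      simp only [pow_zero]
      rw [show (Matrix.diagonal fun _ : Fin M => (1:ℝ)) = 1 from diagonal_one,
        Matrix.mul_one, hUU]
  | succ k ih =>
      rw [pow_succ, ih]
      simp only [Matrix.mul_assoc]
      rw [← Matrix.mul_assoc (star U) U (diagonal d * star U), hU'U, Matrix.one_mul,
        ← Matrix.mul_assoc (diagonal fun l => d l ^ k) (diagonal d) (star U),
        diagonal_mul_diagonal]
      rw [show (fun i => d i ^ k * d i) = fun l => d l ^ (k+1) from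
        funext fun i => by rw [pow_succ]]

lemma trace_pow_eq {A : Matrix (Fin M) (Fin M) ℝ} (hH : A.IsHermitian) (k : ℕ) :
    Matrix.trace (A ^ k) = ∑ l, hH.eigenvalues l ^ k := by
  set U := (hH.eigenvectorUnitary : Matrix (Fin M) (Fin M) ℝ) with hU
  have hUU : U * star U = 1 := Matrix.mem_unitaryGroup_iff.mp hH.eigenvectorUnitary.2
  have hU'U : star U * U = 1 := Matrix.mem_unitaryGroup_iff'.mp hH.eigenvectorUnitary.2
  have hspec : A = U * diagonal hH.eigenvalues * star U := by
    have := hH.spectral_theorem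
    rwa [RCLike.ofReal_real_eq_id, Function.id_comp] at this
  have hpow : A ^ k = U * diagonal (fun l => hH.eigenvalues l ^ k) * star U := by
    conv_lhs => rw [hspec]
    exact conj_pow hUU hU'U _ k
  rw [hpow, Matrix.trace_mul_comm, ← Matrix.mul_assoc, Matrix.trace_mul_comm,
    ← Matrix.mul_assoc, Matrix.mul_assoc, hU'U, Matrix.mul_one, trace_diagonal]

end Statement11Aux


section Statement11Aux2

open Filter

variable {M : ℕ}

lemma step_eig_bound {L : ℕ} {A : Matrix (Fin M) (Fin M) ℝ} {g : ℝ}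
    (hA : A.PosSemidef) (hg : 0 ≤ g) (hop : g * opNorm A ≤ 1/4) (l : Fin M) (t : ℕ) :
    0 ≤ stepSize g L t * hA.1.eigenvalues l ∧ stepSize g L t * hA.1.eigenvalues l ≤ 1/4 := by
  have hlam : 0 ≤ hA.1.eigenvalues l := hA.eigenvalues_nonneg l
  have hle : hA.1.eigenvalues l ≤ opNorm A := eigenvalues_le_opNorm hA.1 l
  have hglam : g * hA.1.eigenvalues l ≤ 1/4 :=
    le_trans (mul_le_mul_of_nonneg_left hle hg) hop
  constructor
  · exact mul_nonneg (stepSize_nonneg hg L t) hlam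
  · calc stepSize g L t * hA.1.eigenvalues l
        ≤ g * hA.1.eigenvalues l := mul_le_mul_of_nonneg_right (stepSize_le hg L t) hlam
      _ ≤ 1/4 := hglam

lemma mu_mem_Icc {L : ℕ} {A : Matrix (Fin M) (Fin M) ℝ} {g : ℝ}
    (hA : A.PosSemidef) (hg : 0 ≤ g) (hop : g * opNorm A ≤ 1/4) (l : Fin M) :
    (0:ℝ) ≤ (∏ t ∈ range L, (1 - stepSize g L (t+1) * hA.1.eigenvalues l)) ∧
      (∏ t ∈ range L, (1 - stepSize g L (t+1) * hA.1.eigenvalues l)) ≤ 1 := by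
  constructor
  · apply Finset.prod_nonneg
    intro t _
    have := (step_eig_bound (L := L) hA hg hop l (t+1)).2
    linarith
  · apply Finset.prod_le_one
    · intro t _
      have := (step_eig_bound (L := L) hA hg hop l (t+1)).2
      linarith
    · intro t _
      have := (step_eig_bound (L := L) hA hg hop l (t+1)).1
      linarith

lemma abs_contraction_entry_le {L : ℕ} {A : Matrix (Fin M) (Fin M) ℝ} {g : ℝ}
    (hA : A.PosSemidef) (hg : 0 ≤ g) (hop : g * opNorm A ≤ 1/4) (a b : Fin M) :
    |contraction A (stepSize g L) L a b| ≤ 1 := by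
  classical
  have hH := hA.1
  set U := (hH.eigenvectorUnitary : Matrix (Fin M) (Fin M) ℝ) with hUdef
  have hUU : U * star U = 1 := Matrix.mem_unitaryGroup_iff.mp hH.eigenvectorUnitary.2
  set x : Fin M → ℝ := Pi.single a 1 with hx
  set y : Fin M → ℝ := Pi.single b 1 with hy
  have hentry : contraction A (stepSize g L) L a b
      = x ⬝ᵥ (contraction A (stepSize g L) L *ᵥ y) := by
    simp [hx, hy, mulVec_single, single_dotProduct]
  set μ : Fin M → ℝ := fun l => ∏ t ∈ range L, (1 - stepSize g L (t+1) * hH.eigenvalues l)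
    with hμ
  have hquad : x ⬝ᵥ (contraction A (stepSize g L) L *ᵥ y)
      = ∑ l, μ l * ((fun i => U i l) ⬝ᵥ x) * ((fun i => U i l) ⬝ᵥ y) := by
    rw [contraction_conj hH _ L, quad_conj]
  rw [hentry, hquad]
  have hbound : ∀ l, |μ l * ((fun i => U i l) ⬝ᵥ x) * ((fun i => U i l) ⬝ᵥ y)|
      ≤ |(fun i => U i l) ⬝ᵥ x| * |(fun i => U i l) ⬝ᵥ y| := by
    intro l
    rw [abs_mul, abs_mul]
    have h1 := (mu_mem_Icc (L := L) hA hg hop l).1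
    have h2 := (mu_mem_Icc (L := L) hA hg hop l).2
    have : |μ l| ≤ 1 := by rw [abs_of_nonneg h1]; exact h2
    nlinarith [abs_nonneg ((fun i => U i l) ⬝ᵥ x), abs_nonneg ((fun i => U i l) ⬝ᵥ y),
      mul_nonneg (abs_nonneg ((fun i => U i l) ⬝ᵥ x)) (abs_nonneg ((fun i => U i l) ⬝ᵥ y))]
  calc |∑ l, μ l * ((fun i => U i l) ⬝ᵥ x) * ((fun i => U i l) ⬝ᵥ y)|
      ≤ ∑ l, |μ l * ((fun i => U i l) ⬝ᵥ x) * ((fun i => U i l) ⬝ᵥ y)| :=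
        Finset.abs_sum_le_sum_abs _ _
    _ ≤ ∑ l, |(fun i => U i l) ⬝ᵥ x| * |(fun i => U i l) ⬝ᵥ y| :=
        Finset.sum_le_sum fun l _ => hbound l
    _ ≤ Real.sqrt (∑ l, |(fun i => U i l) ⬝ᵥ x|^2) * Real.sqrt (∑ l, |(fun i => U i l) ⬝ᵥ y|^2) :=
        Real.sum_mul_le_sqrt_mul_sqrt _ _ _
    _ = Real.sqrt (x ⬝ᵥ x) * Real.sqrt (y ⬝ᵥ y) := by
        rw [show ∑ l, |(fun i => U i l) ⬝ᵥ x|^2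
            = ∑ l, ((fun i => U i l) ⬝ᵥ x) * ((fun i => U i l) ⬝ᵥ x) from
          Finset.sum_congr rfl fun l _ => by rw [sq_abs, sq], parseval_dot' hUU x x]
        rw [show ∑ l, |(fun i => U i l) ⬝ᵥ y|^2
            = ∑ l, ((fun i => U i l) ⬝ᵥ y) * ((fun i => U i l) ⬝ᵥ y) from
          Finset.sum_congr rfl fun l _ => by rw [sq_abs, sq], parseval_dot' hUU y y]
    _ ≤ 1 := by
        have hxx : x ⬝ᵥ x = 1 := by simp [hx, single_dotProduct]
        have hyy : y ⬝ᵥ y = 1 := by simp [hy, single_dotProduct]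
        rw [hxx, hyy, Real.sqrt_one, mul_one]

lemma quad_sum_lowerbound {L : ℕ} {A : Matrix (Fin M) (Fin M) ℝ} {g : ℝ}
    (hA : A.PosSemidef) (hg : 0 ≤ g) (hop : g * opNorm A ≤ 1/4)
    {V : Matrix (Fin M) (Fin M) ℝ} (hVV : V * star V = 1) (hV'V : star V * V = 1)
    (T : Finset (Fin M)) :
    (T.card : ℝ) - (countAbove A ((effSteps L : ℝ) * g) (1/4) : ℝ)
      ≤ Real.exp 1 *
        ∑ j ∈ T, (fun i => V i j) ⬝ᵥ (contraction A (stepSize g L) L *ᵥ (fun i => V i j)) := by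
  classical
  have hH := hA.1
  set U := (hH.eigenvectorUnitary : Matrix (Fin M) (Fin M) ℝ) with hUdef
  have hUU : U * star U = 1 := Matrix.mem_unitaryGroup_iff.mp hH.eigenvectorUnitary.2
  have hU'U : star U * U = 1 := Matrix.mem_unitaryGroup_iff'.mp hH.eigenvectorUnitary.2
  set μ : Fin M → ℝ := fun l => ∏ t ∈ range L, (1 - stepSize g L (t+1) * hH.eigenvalues l)
    with hμ
  set c : Fin M → ℝ := fun l => ∑ j ∈ T, ((fun i => U i l) ⬝ᵥ (fun i => V i j))^2 with hc
  have hquad : ∀ j, (fun i => V i j) ⬝ᵥ (contraction A (stepSize g L) L *ᵥ (fun i => V i j))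
      = ∑ l, μ l * ((fun i => U i l) ⬝ᵥ (fun i => V i j))^2 := by
    intro j
    rw [contraction_conj hH _ L, quad_conj]
    exact Finset.sum_congr rfl fun l _ => by rw [sq]; ring
  have hswap : ∑ j ∈ T, (fun i => V i j) ⬝ᵥ (contraction A (stepSize g L) L *ᵥ (fun i => V i j))
      = ∑ l, μ l * c l := by
    simp only [hquad]
    rw [Finset.sum_comm]
    exact Finset.sum_congr rfl fun l _ => by rw [hc, Finset.mul_sum]
  have hμ0 : ∀ l, 0 ≤ μ l := fun l => (mu_mem_Icc (L := L) hA hg hop l).1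
  have hc0 : ∀ l, 0 ≤ c l := fun l => Finset.sum_nonneg fun j _ => sq_nonneg _
  have hc1 : ∀ l, c l ≤ 1 := by
    intro l
    have hfull : ∑ j, ((fun i => U i l) ⬝ᵥ (fun i => V i j))^2 = 1 := by
      have h := parseval_dot' hVV (fun i => U i l) (fun i => U i l)
      rw [col_dot_col hU'U l] at h
      rw [← h]
      apply Finset.sum_congr rfl
      intro j _
      rw [sq, dotProduct_comm]
    calc c l ≤ ∑ j, ((fun i => U i l) ⬝ᵥ (fun i => V i j))^2 :=
          Finset.sum_le_sum_of_subset_of_nonneg (Finset.subset_univ T)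
            (fun j _ _ => sq_nonneg _)
      _ = 1 := hfull
  have hsumc : ∑ l, c l = (T.card : ℝ) := by
    rw [hc]
    rw [Finset.sum_comm]
    have : ∀ j ∈ T, ∑ l, ((fun i => U i l) ⬝ᵥ (fun i => V i j))^2 = 1 := by
      intro j _
      have h := parseval_dot' hUU (fun i => V i j) (fun i => V i j)
      rw [col_dot_col hV'V j] at h
      rw [← h]
      exact Finset.sum_congr rfl fun l _ => by rw [sq]
    rw [Finset.sum_congr rfl this, Finset.sum_const, nsmul_eq_mul, mul_one]
  set G := Finset.univ.filter (fun l : Fin M => Real.exp (-1) ≤ μ l) with hG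
  set Gc := Finset.univ.filter (fun l : Fin M => ¬ Real.exp (-1) ≤ μ l) with hGc
  have hGc_card : (Gc.card : ℝ) ≤ (countAbove A ((effSteps L : ℝ) * g) (1/4) : ℝ) := by
    have hsubset : Gc ⊆ Finset.univ.filter
        (fun l : Fin M => 1/4 < (effSteps L : ℝ) * g * hH.eigenvalues l) := by
      intro l hl
      simp only [hGc, Finset.mem_filter, Finset.mem_univ, true_and] at hl ⊢
      by_contra hno
      push_neg at hno
      apply hl
      have hlam := hA.eigenvalues_nonneg l
      have hglam : g * hH.eigenvalues l ≤ 1/4 :=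
        le_trans (mul_le_mul_of_nonneg_left (eigenvalues_le_opNorm hH l) hg) hop
      refine prod_one_sub_step_ge hg hlam hglam L ?_
      rw [mul_assoc] at hno
      exact hno
    have hcA : countAbove A ((effSteps L : ℝ) * g) (1/4)
        = (Finset.univ.filter
            (fun l : Fin M => 1/4 < (effSteps L : ℝ) * g * hH.eigenvalues l)).card := by
      rw [countAbove]
      exact card_filter_eigval_eq hH (fun x => 1/4 < (effSteps L : ℝ) * g * x)
    rw [hcA]
    exact_mod_cast Finset.card_le_card hsubset
  have hGsum : Real.exp (-1) *
      ((T.card : ℝ) - (countAbove A ((effSteps L : ℝ) * g) (1/4) : ℝ)) ≤ ∑ l, μ l * c l := by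
    have hsplit : ∑ l ∈ G, c l + ∑ l ∈ Gc, c l = ∑ l, c l :=
      Finset.sum_filter_add_sum_filter_not _ _ _
    have hGcsum : ∑ l ∈ Gc, c l ≤ (Gc.card : ℝ) := by
      have h := Finset.sum_le_card_nsmul Gc c 1 (fun l _ => hc1 l)
      simpa using h
    have hGsum_ge : (T.card : ℝ) - (countAbove A ((effSteps L : ℝ) * g) (1/4) : ℝ)
        ≤ ∑ l ∈ G, c l := by
      have heq : ∑ l ∈ G, c l = ∑ l, c l - ∑ l ∈ Gc, c l := by linarith
      rw [heq, hsumc]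
      linarith [hGc_card, hGcsum]
    calc Real.exp (-1) * ((T.card : ℝ) - (countAbove A ((effSteps L : ℝ) * g) (1/4) : ℝ))
        ≤ Real.exp (-1) * ∑ l ∈ G, c l :=
          mul_le_mul_of_nonneg_left hGsum_ge (Real.exp_pos _).le
      _ = ∑ l ∈ G, Real.exp (-1) * c l := Finset.mul_sum _ _ _
      _ ≤ ∑ l ∈ G, μ l * c l := by
          apply Finset.sum_le_sum
          intro l hl
          have hmem : Real.exp (-1) ≤ μ l := by
            simpa [hG] using (Finset.mem_filter.1 hl).2
          exact mul_le_mul_of_nonneg_right hmem (hc0 l)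
      _ ≤ ∑ l, μ l * c l :=
          Finset.sum_le_sum_of_subset_of_nonneg (Finset.filter_subset _ _)
            (fun l _ _ => mul_nonneg (hμ0 l) (hc0 l))
  rw [hswap]
  have hee : Real.exp 1 * Real.exp (-1) = 1 := by
    rw [← Real.exp_add]; norm_num
  have hfin := mul_le_mul_of_nonneg_left hGsum (Real.exp_pos 1).le
  calc (T.card : ℝ) - (countAbove A ((effSteps L : ℝ) * g) (1/4) : ℝ)
      = Real.exp 1 * (Real.exp (-1) *
          ((T.card : ℝ) - (countAbove A ((effSteps L : ℝ) * g) (1/4) : ℝ))) := by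
        rw [← mul_assoc, hee, one_mul]
    _ ≤ Real.exp 1 * ∑ l, μ l * c l := hfin

end Statement11Aux2


section Statement11Aux3

open Filter Topology

variable {M : ℕ} {Ω : Type*} [MeasurableSpace Ω]

lemma dot_eq_sum (B : Matrix (Fin M) (Fin M) ℝ) (x y : Fin M → ℝ) :
    x ⬝ᵥ (B *ᵥ y) = ∑ a, ∑ b, x a * y b * B a b := by
  simp only [dotProduct, mulVec, Finset.mul_sum]
  exact Finset.sum_congr rfl fun a _ => Finset.sum_congr rfl fun b _ => by ring

lemma integrable_quad {F : Ω → Matrix (Fin M) (Fin M) ℝ} {P : Measure Ω}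
    (hFint : ∀ a b, Integrable (fun ω => F ω a b) P) (x y : Fin M → ℝ) :
    Integrable (fun ω => x ⬝ᵥ (F ω *ᵥ y)) P := by
  have heq : (fun ω => x ⬝ᵥ (F ω *ᵥ y)) = fun ω => ∑ a, ∑ b, x a * y b * F ω a b :=
    funext fun ω => dot_eq_sum _ x y
  rw [heq]
  exact integrable_finset_sum _ fun a _ => integrable_finset_sum _ fun b _ =>
    ((hFint a b).const_mul _)

lemma dot_expMat {P : Measure Ω} {F : Ω → Matrix (Fin M) (Fin M) ℝ}
    (hFint : ∀ a b, Integrable (fun ω => F ω a b) P) (x y : Fin M → ℝ) :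
    x ⬝ᵥ (expMat P F *ᵥ y) = ∫ ω, x ⬝ᵥ (F ω *ᵥ y) ∂P := by
  rw [dot_eq_sum]
  calc ∑ a, ∑ b, x a * y b * expMat P F a b
      = ∑ a, ∑ b, ∫ ω, x a * y b * F ω a b ∂P := by
        refine Finset.sum_congr rfl fun a _ => Finset.sum_congr rfl fun b _ => ?_
        rw [show expMat P F a b = ∫ ω, F ω a b ∂P from rfl, MeasureTheory.integral_const_mul]
    _ = ∑ a, ∫ ω, ∑ b, x a * y b * F ω a b ∂P := by
        refine Finset.sum_congr rfl fun a _ => ?_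
        rw [integral_finset_sum _ fun b _ => (hFint a b).const_mul _]
    _ = ∫ ω, ∑ a, ∑ b, x a * y b * F ω a b ∂P := by
        rw [integral_finset_sum _ fun a _ =>
          integrable_finset_sum _ fun b _ => (hFint a b).const_mul _]
    _ = ∫ ω, x ⬝ᵥ (F ω *ᵥ y) ∂P := by
        congr 1
        funext ω
        rw [dot_eq_sum]

lemma aemeasurable_countAbove {L : ℕ} (P : Measure Ω)
    {Sig : Ω → Matrix (Fin M) (Fin M) ℝ} {g : Ω → ℝ}
    (hent : ∀ a b, Measurable fun ω => Sig ω a b) (hg : Measurable g)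
    (hae : ∀ᵐ ω ∂P, (Sig ω).PosSemidef ∧ 0 ≤ g ω ∧ g ω * opNorm (Sig ω) ≤ 1/4) :
    AEMeasurable (fun ω => (countAbove (Sig ω) ((effSteps L : ℝ) * g ω) (1/4) : ℝ)) P := by
  classical
  set R : ℝ := (effSteps L : ℝ) / 4 + 1 with hR
  have hcont : ∀ n : ℕ, ContinuousOn
      (fun x : ℝ => min 1 (((n:ℝ)+1) * max 0 (x - 1/4))) (Set.Icc 0 R) :=
    fun n => (continuous_const.min (continuous_const.mul
      (continuous_const.max (continuous_id.sub continuous_const)))).continuousOn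
  choose p hp using fun n : ℕ =>
    exists_polynomial_near_of_continuousOn 0 R (fun x => min 1 (((n:ℝ)+1) * max 0 (x - 1/4)))
      (hcont n) (1/((n:ℝ)+1)) (by positivity)
  set G : ℕ → Ω → ℝ := fun n ω => ∑ k ∈ Finset.range ((p n).natDegree + 1),
      (p n).coeff k * ((effSteps L : ℝ) * g ω)^k * Matrix.trace ((Sig ω)^k) with hGdef
  have hGmeas : ∀ n, Measurable (G n) := by
    intro n
    apply Finset.measurable_sum
    intro k _
    have htr : Measurable fun ω => Matrix.trace ((Sig ω)^k) := by
      simp only [Matrix.trace, Matrix.diag]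
      exact Finset.measurable_sum _ fun a _ => measurable_pow_entry hent k a a
    exact ((measurable_const.mul ((measurable_const.mul hg).pow_const k)).mul htr)
  apply aemeasurable_of_tendsto_metrizable_ae atTop (fun n => (hGmeas n).aemeasurable)
  filter_upwards [hae] with ω hω
  obtain ⟨hpsd, hg0, hop⟩ := hω
  have hH := hpsd.1
  set s : ℝ := (effSteps L : ℝ) * g ω with hs
  have hid : ∀ n, G n ω = ∑ l, (p n).eval (s * hH.eigenvalues l) := by
    intro n
    rw [hGdef]
    simp only
    calc ∑ k ∈ Finset.range ((p n).natDegree + 1),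
          (p n).coeff k * s^k * Matrix.trace ((Sig ω)^k)
        = ∑ k ∈ Finset.range ((p n).natDegree + 1),
            ∑ l, (p n).coeff k * (s * hH.eigenvalues l)^k := by
          refine Finset.sum_congr rfl fun k _ => ?_
          rw [trace_pow_eq hH k, Finset.mul_sum]
          refine Finset.sum_congr rfl fun l _ => ?_
          rw [mul_pow]
          ring
      _ = ∑ l, ∑ k ∈ Finset.range ((p n).natDegree + 1),
            (p n).coeff k * (s * hH.eigenvalues l)^k := Finset.sum_comm
      _ = ∑ l, (p n).eval (s * hH.eigenvalues l) := by
          refine Finset.sum_congr rfl fun l _ => ?_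
          rw [Polynomial.eval_eq_sum_range]
  have hxmem : ∀ l, s * hH.eigenvalues l ∈ Set.Icc (0:ℝ) R := by
    intro l
    have hlam := hpsd.eigenvalues_nonneg l
    have hglam : g ω * hH.eigenvalues l ≤ 1/4 :=
      le_trans (mul_le_mul_of_nonneg_left (eigenvalues_le_opNorm hH l) hg0) hop
    constructor
    · exact mul_nonneg (mul_nonneg (Nat.cast_nonneg _) hg0) hlam
    · calc s * hH.eigenvalues l = (effSteps L : ℝ) * (g ω * hH.eigenvalues l) := by
            rw [hs, mul_assoc]
        _ ≤ (effSteps L : ℝ) * (1/4) :=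
            mul_le_mul_of_nonneg_left hglam (Nat.cast_nonneg _)
        _ ≤ R := by rw [hR]; linarith
  have hcnt : ((countAbove (Sig ω) s (1/4) : ℕ) : ℝ)
      = ∑ l, (if 1/4 < s * hH.eigenvalues l then (1:ℝ) else 0) := by
    rw [countAbove, card_filter_eigval_eq hH (fun x => 1/4 < s * x), Finset.card_filter]
    push_cast
    rfl
  rw [show (fun n => G n ω) = fun n => ∑ l, (p n).eval (s * hH.eigenvalues l) from
    funext hid, hcnt]
  apply tendsto_finset_sum
  intro l _
  set x : ℝ := s * hH.eigenvalues l with hxdef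
  have hx := hxmem l
  have h1 : ∀ n : ℕ, |(p n).eval x - min 1 (((n:ℝ)+1) * max 0 (x - 1/4))| < 1/((n:ℝ)+1) :=
    fun n => hp n x hx
  have hf : Tendsto (fun n : ℕ => min 1 (((n:ℝ)+1) * max 0 (x - 1/4))) atTop
      (𝓝 (if 1/4 < x then (1:ℝ) else 0)) := by
    by_cases hxc : 1/4 < x
    · rw [if_pos hxc]
      have hpos : 0 < x - 1/4 := by linarith
      obtain ⟨N, hN⟩ := exists_nat_ge (1/(x - 1/4))
      refine Filter.Tendsto.congr' ?_
        (show Tendsto (fun _ : ℕ => (1:ℝ)) atTop (𝓝 1) from tendsto_const_nhds)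
      filter_upwards [Filter.eventually_ge_atTop N] with n hn
      have hge : (1:ℝ) ≤ ((n:ℝ)+1) * (x - 1/4) := by
        have hNn : (N:ℝ) ≤ (n:ℝ) := Nat.cast_le.2 hn
        have h4 : 1/(x-1/4) ≤ (n:ℝ)+1 := by linarith
        rw [div_le_iff₀ hpos] at h4
        linarith [mul_le_mul_of_nonneg_right h4 hpos.le]
      rw [max_eq_right hpos.le, min_eq_left hge]
    · rw [if_neg hxc]
      have hzero : ∀ n:ℕ, min 1 (((n:ℝ)+1) * max 0 (x - 1/4)) = 0 := by
        intro n
        rw [max_eq_left (by linarith), mul_zero, min_eq_right (by norm_num)]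
      rw [show (fun n : ℕ => min 1 (((n:ℝ)+1) * max 0 (x - 1/4))) = fun _ => (0:ℝ) from
        funext hzero]
      exact tendsto_const_nhds
  have h2 : Tendsto (fun n : ℕ => (p n).eval x - min 1 (((n:ℝ)+1) * max 0 (x - 1/4))) atTop
      (𝓝 0) := by
    apply squeeze_zero_norm (fun n => (h1 n).le)
    exact tendsto_one_div_add_atTop_nhds_zero_nat
  have h3 := h2.add hf
  rw [zero_add] at h3
  refine h3.congr fun n => ?_
  ring

end Statement11Aux3

/-- For a random PSD matrix `Σ̂` and a `Σ̂`-measurable stepsize `γ₀` with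
`γ₀‖Σ̂‖ ≤ 1/4` a.s., the geometric-schedule contraction satisfies
`μ_{M-i+1}(E[∏ₜ (I - γₜ Σ̂)]) ≥ 1/(2e)` for every `i ≥ 2k̄ + 1` with `i ≤ M`, where
`k̄ = E[#{i : λ̂ᵢ L̃ γ₀ > 1/4}]`. -/
theorem statement_11
    (M L : ℕ) (Ω : Type*) [MeasurableSpace Ω] (P : Measure Ω)
    (Sig : Ω → Matrix (Fin M) (Fin M) ℝ) (g0 : Ω → ℝ)
    (hP : IsProbabilityMeasure P)
    (hmeas : Measurable fun ω => (fun i j => Sig ω i j : Fin M → Fin M → ℝ))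
    (hg0 : @Measurable Ω ℝ
      (MeasurableSpace.comap (fun ω => (fun i j => Sig ω i j : Fin M → Fin M → ℝ))
        inferInstance) _ g0)
    (hae : ∀ᵐ ω ∂P, (Sig ω).PosSemidef ∧ 0 ≤ g0 ω ∧ g0 ω * opNorm (Sig ω) ≤ 1 / 4) :
    ∀ i : ℕ, i ≤ M →
      2 * (∫ ω, (countAbove (Sig ω) ((effSteps L : ℝ) * g0 ω) (1 / 4) : ℝ) ∂P) + 1 ≤ (i : ℝ) →
      1 / (2 * Real.exp 1) ≤
        eigval (expMat P fun ω => contraction (Sig ω) (stepSize (g0 ω) L) L) (M - i + 1) := by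
  classical
  intro i hiM hibound
  set kbar : ℝ := ∫ ω, (countAbove (Sig ω) ((effSteps L : ℝ) * g0 ω) (1 / 4) : ℝ) ∂P
    with hkbar
  have hk0 : 0 ≤ kbar := integral_nonneg fun ω => by positivity
  have hi1 : 1 ≤ i := by
    have h1 : (1:ℝ) ≤ (i:ℝ) := by linarith
    exact_mod_cast h1
  have hent : ∀ a b, Measurable fun ω => Sig ω a b := fun a b =>
    (measurable_pi_apply b).comp ((measurable_pi_apply a).comp hmeas)
  have hgmeas : Measurable g0 := hg0.mono hmeas.comap_le le_rfl
  have hγmeas : ∀ t, Measurable fun ω => stepSize (g0 ω) L t := fun t => by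
    unfold stepSize
    exact hgmeas.div_const _
  set F : Ω → Matrix (Fin M) (Fin M) ℝ :=
    fun ω => contraction (Sig ω) (stepSize (g0 ω) L) L with hF
  have hFmeas : ∀ a b, Measurable fun ω => F ω a b := fun a b =>
    measurable_contraction_entry hent hγmeas L a b
  have hFbdd : ∀ᵐ ω ∂P, ∀ a b, |F ω a b| ≤ 1 := by
    filter_upwards [hae] with ω hω
    intro a b
    exact abs_contraction_entry_le hω.1 hω.2.1 hω.2.2 a b
  have hFint : ∀ a b, Integrable (fun ω => F ω a b) P := by
    intro a b
    refine ⟨(hFmeas a b).aestronglyMeasurable, ?_⟩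
    apply MeasureTheory.HasFiniteIntegral.of_bounded (C := 1)
    filter_upwards [hFbdd] with ω h
    simpa [Real.norm_eq_abs] using h a b
  set Abar : Matrix (Fin M) (Fin M) ℝ := expMat P F with hAbar
  have hAbarent : ∀ a b, Abar a b = ∫ ω, F ω a b ∂P := fun a b => rfl
  have hAbarH : Abar.IsHermitian := by
    have hsymm : ∀ a b, (∫ ω, F ω a b ∂P) = ∫ ω, F ω b a ∂P := by
      intro a b
      apply integral_congr_ae
      filter_upwards [hae] with ω hω
      have ht : (Sig ω)ᵀ = Sig ω := by
        ext u v
        rw [Matrix.transpose_apply]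
        have h := hω.1.1.apply u v
        rw [star_trivial] at h
        exact h
      have hct := contraction_transpose ht (stepSize (g0 ω) L) L
      calc F ω a b = (F ω)ᵀ b a := rfl
        _ = F ω b a := by rw [hF]; rw [hct]
    show Abarᴴ = Abar
    ext a b
    rw [conjTranspose_apply, star_trivial]
    show (∫ ω, F ω b a ∂P) = ∫ ω, F ω a b ∂P
    exact (hsymm b a)
  set ν : Fin M → ℝ := hAbarH.eigenvalues with hν
  set V : Matrix (Fin M) (Fin M) ℝ := (hAbarH.eigenvectorUnitary : Matrix (Fin M) (Fin M) ℝ)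
    with hV
  have hVV : V * star V = 1 := Matrix.mem_unitaryGroup_iff.mp hAbarH.eigenvectorUnitary.2
  have hV'V : star V * V = 1 := Matrix.mem_unitaryGroup_iff'.mp hAbarH.eigenvectorUnitary.2
  set τ : ℝ := 1/(2 * Real.exp 1) with hτ
  set bad : Finset (Fin M) := Finset.univ.filter (fun j : Fin M => ν j < τ) with hbad
  set r : ℕ := bad.card with hr
  have hνint : ∀ j : Fin M, ν j = ∫ ω, (fun i => V i j) ⬝ᵥ (F ω *ᵥ (fun i => V i j)) ∂P := by
    intro j
    rw [← dot_expMat hFint]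
    have hcol : (fun i => V i j) = ⇑(hAbarH.eigenvectorBasis j) :=
      funext fun i => hAbarH.eigenvectorUnitary_apply i j
    have hmv : expMat P F *ᵥ (fun i => V i j) = ν j • (fun i => V i j) := by
      rw [hcol]
      exact hAbarH.mulVec_eigenvectorBasis j
    rw [hmv, dotProduct_smul, col_dot_col hV'V j, smul_eq_mul, mul_one]
  set Sfun : Ω → ℝ := fun ω => ∑ j ∈ bad, (fun i => V i j) ⬝ᵥ (F ω *ᵥ (fun i => V i j))
    with hSfun
  have hSint : Integrable Sfun P := integrable_finset_sum _ fun j _ => integrable_quad hFint _ _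
  have hsumν : ∑ j ∈ bad, ν j = ∫ ω, Sfun ω ∂P := by
    rw [hSfun]
    rw [integral_finset_sum _ fun j _ => integrable_quad hFint _ _]
    exact Finset.sum_congr rfl fun j _ => hνint j
  have hub : ∑ j ∈ bad, ν j ≤ (r:ℝ) * τ := by
    have hle : ∀ j ∈ bad, ν j ≤ τ := by
      intro j hj
      exact le_of_lt (by simpa [hbad] using (Finset.mem_filter.1 hj).2)
    have := Finset.sum_le_card_nsmul bad ν τ hle
    simpa [hr, nsmul_eq_mul] using this
  have hcount_meas : AEMeasurable
      (fun ω => (countAbove (Sig ω) ((effSteps L : ℝ) * g0 ω) (1 / 4) : ℝ)) P :=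
    aemeasurable_countAbove (L := L) P hent hgmeas hae
  have hcount_int : Integrable
      (fun ω => (countAbove (Sig ω) ((effSteps L : ℝ) * g0 ω) (1 / 4) : ℝ)) P := by
    refine ⟨hcount_meas.aestronglyMeasurable, ?_⟩
    apply MeasureTheory.HasFiniteIntegral.of_bounded (C := (M:ℝ))
    apply Filter.Eventually.of_forall
    intro ω
    rw [Real.norm_eq_abs, abs_of_nonneg (by positivity)]
    have : countAbove (Sig ω) ((effSteps L : ℝ) * g0 ω) (1 / 4) ≤ M := by
      calc countAbove (Sig ω) ((effSteps L : ℝ) * g0 ω) (1 / 4)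
          ≤ (Finset.univ : Finset (Fin M)).card := Finset.card_le_card (Finset.filter_subset _ _)
        _ = M := by simp
    exact_mod_cast this
  have hlb : ∀ᵐ ω ∂P, (r:ℝ) - (countAbove (Sig ω) ((effSteps L : ℝ) * g0 ω) (1 / 4) : ℝ)
      ≤ Real.exp 1 * Sfun ω := by
    filter_upwards [hae] with ω hω
    exact quad_sum_lowerbound hω.1 hω.2.1 hω.2.2 hVV hV'V bad
  have hint_lb : (r:ℝ) - kbar ≤ Real.exp 1 * ∫ ω, Sfun ω ∂P := by
    have hmono : ∫ ω, ((r:ℝ) - (countAbove (Sig ω) ((effSteps L : ℝ) * g0 ω) (1 / 4) : ℝ)) ∂P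
        ≤ ∫ ω, Real.exp 1 * Sfun ω ∂P := by
      refine integral_mono_ae ?_ (hSint.const_mul _) hlb
      exact (integrable_const _).sub hcount_int
    rw [integral_sub (integrable_const _) hcount_int,
      MeasureTheory.integral_const_mul] at hmono
    simpa [hkbar] using hmono
  have hrle : (r:ℝ) ≤ 2 * kbar := by
    have h5 : Real.exp 1 * ∫ ω, Sfun ω ∂P = Real.exp 1 * ∑ j ∈ bad, ν j := by rw [hsumν]
    have h6 : Real.exp 1 * ∑ j ∈ bad, ν j ≤ Real.exp 1 * ((r:ℝ) * τ) :=
      mul_le_mul_of_nonneg_left hub (Real.exp_pos 1).le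
    have h7 : Real.exp 1 * ((r:ℝ) * τ) = (r:ℝ)/2 := by
      rw [hτ]
      have : Real.exp 1 ≠ 0 := (Real.exp_pos 1).ne'
      field_simp
    linarith
  have hri : r < i := by
    have : (r:ℝ) < (i:ℝ) := by linarith
    exact_mod_cast this
  have hres := le_eigval_of_count_lt hAbarH hi1 hiM (τ := τ) (by simpa [hbad, hr] using hri)
  simpa [hτ, hAbar, hF] using hres

end ScalingLaw
end
end
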